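/- arXiv:1312.1400 — 5 statements merged into one kernel-verified Lean document; each statement's English description precedes it below -/
import Mathlib

section
/- Let A and B be real symmetric n×n matrices with Q(A) ∩ Q(B) = N(A) ∩ N(B) and dim(N(A) ∩ N(B)) ≤ n − 3. Then A and B are simultaneously diagonalizable via congruence. -/
open Matrix Set

section SDCProof

variable {m : ℕ}



lemma dot_symm (A : Matrix (Fin m) (Fin m) ℝ) (hA : A.IsSymm) (x y : Fin m → ℝ) :
    x ⬝ᵥ A *ᵥ y = y ⬝ᵥ A *ᵥ x := by
  rw [Matrix.dotProduct_mulVec, dotProduct_comm, ← Matrix.mulVec_transpose, hA]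

lemma quad_expand3 (A : Matrix (Fin m) (Fin m) ℝ) (x y w : Fin m → ℝ) (a b c : ℝ) :
    (a • x + b • y + c • w) ⬝ᵥ A *ᵥ (a • x + b • y + c • w) =
      a^2 * (x ⬝ᵥ A *ᵥ x) + b^2 * (y ⬝ᵥ A *ᵥ y) + c^2 * (w ⬝ᵥ A *ᵥ w)
      + a*b*((x ⬝ᵥ A *ᵥ y) + (y ⬝ᵥ A *ᵥ x))
      + a*c*((x ⬝ᵥ A *ᵥ w) + (w ⬝ᵥ A *ᵥ x))
      + b*c*((y ⬝ᵥ A *ᵥ w) + (w ⬝ᵥ A *ᵥ y)) := by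
  simp only [Matrix.mulVec_add, Matrix.mulVec_smul, dotProduct_add,
    add_dotProduct, dotProduct_smul, smul_dotProduct, smul_eq_mul]
  ring

lemma dot_comb3 (A : Matrix (Fin m) (Fin m) ℝ) (u x y w : Fin m → ℝ) (a b g : ℝ) :
    u ⬝ᵥ A *ᵥ (a • x + b • y + g • w) =
      a*(u ⬝ᵥ A *ᵥ x) + b*(u ⬝ᵥ A *ᵥ y) + g*(u ⬝ᵥ A *ᵥ w) := by
  simp only [Matrix.mulVec_add, Matrix.mulVec_smul, dotProduct_add,
    dotProduct_smul, smul_eq_mul]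


lemma quad_smul (A : Matrix (Fin m) (Fin m) ℝ) (x : Fin m → ℝ) (c : ℝ) :
    (c • x) ⬝ᵥ A *ᵥ (c • x) = c^2 * (x ⬝ᵥ A *ᵥ x) := by
  simp only [Matrix.mulVec_smul, dotProduct_smul, smul_dotProduct, smul_eq_mul]
  ring

lemma quad_continuous' (A : Matrix (Fin m) (Fin m) ℝ) :
    Continuous fun v : Fin m → ℝ => v ⬝ᵥ A *ᵥ v := by
  have : (fun v : Fin m → ℝ => v ⬝ᵥ A *ᵥ v)
      = fun v => ∑ i, v i * ∑ j, A i j * v j := rfl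
  rw [this]
  exact continuous_finset_sum _ fun i _ => (continuous_apply i).mul
    (continuous_finset_sum _ fun j _ => continuous_const.mul (continuous_apply j))

lemma final_step (A B : Matrix (Fin m) (Fin m) ℝ)
    (h0 : ∀ v, v ⬝ᵥ A *ᵥ v = 0 → v ⬝ᵥ B *ᵥ v = 0 → v = 0)
    (c d : ℝ) (hcd : ¬ (c = 0 ∧ d = 0))
    (v : ℝ → Fin m → ℝ) (T : ℝ) (hT : 0 ≤ T) (hv : Continuous v)
    (hqh : ∀ t ∈ Icc 0 T, d * ((v t) ⬝ᵥ A *ᵥ (v t)) - c * ((v t) ⬝ᵥ B *ᵥ (v t)) = 0)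
    (hnz : ∀ t ∈ Icc 0 T, v t ≠ 0)
    (hstart : 0 < c * ((v 0) ⬝ᵥ A *ᵥ (v 0)) + d * ((v 0) ⬝ᵥ B *ᵥ (v 0)))
    (hend : c * ((v T) ⬝ᵥ A *ᵥ (v T)) + d * ((v T) ⬝ᵥ B *ᵥ (v T)) < 0) : False := by
  set g : ℝ → ℝ := fun t => c * ((v t) ⬝ᵥ A *ᵥ (v t)) + d * ((v t) ⬝ᵥ B *ᵥ (v t)) with hg
  have hgc : Continuous g := by
    apply Continuous.add
    · exact continuous_const.mul ((quad_continuous' A).comp hv)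
    · exact continuous_const.mul ((quad_continuous' B).comp hv)
  have h0mem : (0:ℝ) ∈ Icc (g T) (g 0) := ⟨le_of_lt hend, le_of_lt hstart⟩
  obtain ⟨t0, ht0, hgt0⟩ := intermediate_value_Icc' hT hgc.continuousOn h0mem
  have hq := hqh t0 ht0
  have hc2 : c^2 + d^2 ≠ 0 := by
    intro hh
    exact hcd ⟨by nlinarith [sq_nonneg c, sq_nonneg d], by nlinarith [sq_nonneg c, sq_nonneg d]⟩
  have hqA : (v t0) ⬝ᵥ A *ᵥ (v t0) = 0 := by
    have h5 : (c^2 + d^2) * ((v t0) ⬝ᵥ A *ᵥ (v t0)) = 0 := by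
      have h6 := hgt0
      simp only [hg] at h6
      linear_combination c * h6 + d * hq
    exact (mul_eq_zero.mp h5).resolve_left hc2
  have hqB : (v t0) ⬝ᵥ B *ᵥ (v t0) = 0 := by
    have h5 : (c^2 + d^2) * ((v t0) ⬝ᵥ B *ᵥ (v t0)) = 0 := by
      have h6 := hgt0
      simp only [hg] at h6
      linear_combination d * h6 - c * hq
    exact (mul_eq_zero.mp h5).resolve_left hc2
  exact hnz t0 ht0 (h0 _ hqA hqB)

/-- master path lemma: a path from `x` to `y'` inside the zero set of the form
`d•A - c•B`, along which `c•A + d•B` changes sign, yields a contradiction. -/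
lemma path_case (A B : Matrix (Fin m) (Fin m) ℝ) (hA : A.IsSymm) (hB : B.IsSymm)
    (h0 : ∀ v, v ⬝ᵥ A *ᵥ v = 0 → v ⬝ᵥ B *ᵥ v = 0 → v = 0)
    (c d : ℝ) (hcd : ¬ (c = 0 ∧ d = 0))
    (x y' w : Fin m → ℝ) (r : ℝ) (hr : 0 ≤ r)
    (hqhx : d * (x ⬝ᵥ A *ᵥ x) - c * (x ⬝ᵥ B *ᵥ x) = 0)
    (hqhy : d * (y' ⬝ᵥ A *ᵥ y') - c * (y' ⬝ᵥ B *ᵥ y') = 0)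
    (hBxw : d * (x ⬝ᵥ A *ᵥ w) - c * (x ⬝ᵥ B *ᵥ w) = 0)
    (hByw : d * (y' ⬝ᵥ A *ᵥ w) - c * (y' ⬝ᵥ B *ᵥ w) = 0)
    (hrw : r * (d * (w ⬝ᵥ A *ᵥ w) - c * (w ⬝ᵥ B *ᵥ w))
        = -(d * (x ⬝ᵥ A *ᵥ y') - c * (x ⬝ᵥ B *ᵥ y')))
    (hnz : ∀ a b g : ℝ, a^2 + b^2 = 1 → a • x + b • y' + g • w = 0 → False)
    (hstart : 0 < c * (x ⬝ᵥ A *ᵥ x) + d * (x ⬝ᵥ B *ᵥ x))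
    (hend : c * (y' ⬝ᵥ A *ᵥ y') + d * (y' ⬝ᵥ B *ᵥ y') < 0) : False := by
  set γ : ℝ → ℝ := fun t => Real.sqrt (2*(Real.sin t * Real.cos t)*r) with hγ
  set v : ℝ → Fin m → ℝ :=
    fun t => Real.cos t • x + Real.sin t • y' + γ t • w with hv
  have hγc : Continuous γ := Real.continuous_sqrt.comp (by fun_prop)
  have hvc : Continuous v := by
    apply Continuous.add
    apply Continuous.add
    · exact Real.continuous_cos.smul continuous_const
    · exact Real.continuous_sin.smul continuous_const
    · exact hγc.smul continuous_const
  have hv0 : v 0 = x := by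
    simp [hv, hγ]
  have hvT : v (Real.pi/2) = y' := by
    simp [hv, hγ]
  -- symmetric dot products rewritten
  have sA1 : y' ⬝ᵥ A *ᵥ x = x ⬝ᵥ A *ᵥ y' := dot_symm A hA y' x
  have sA2 : w ⬝ᵥ A *ᵥ x = x ⬝ᵥ A *ᵥ w := dot_symm A hA w x
  have sA3 : w ⬝ᵥ A *ᵥ y' = y' ⬝ᵥ A *ᵥ w := dot_symm A hA w y'
  have sB1 : y' ⬝ᵥ B *ᵥ x = x ⬝ᵥ B *ᵥ y' := dot_symm B hB y' x
  have sB2 : w ⬝ᵥ B *ᵥ x = x ⬝ᵥ B *ᵥ w := dot_symm B hB w x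
  have sB3 : w ⬝ᵥ B *ᵥ y' = y' ⬝ᵥ B *ᵥ w := dot_symm B hB w y'
  apply final_step A B h0 c d hcd v (Real.pi/2) (le_of_lt (by positivity)) hvc
  · -- hqh
    intro t ht
    have hsin : 0 ≤ Real.sin t :=
      Real.sin_nonneg_of_nonneg_of_le_pi ht.1 (le_trans ht.2 (by linarith [Real.pi_pos]))
    have hcos : 0 ≤ Real.cos t :=
      Real.cos_nonneg_of_mem_Icc ⟨by linarith [ht.1, Real.pi_pos], ht.2⟩
    have hγ2 : γ t ^ 2 = 2*(Real.sin t * Real.cos t)*r := by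
      rw [hγ]
      exact Real.sq_sqrt (by positivity)
    have eA := quad_expand3 A x y' w (Real.cos t) (Real.sin t) (γ t)
    have eB := quad_expand3 B x y' w (Real.cos t) (Real.sin t) (γ t)
    rw [hγ2, sA1, sA2, sA3] at eA
    rw [hγ2, sB1, sB2, sB3] at eB
    show d * ((v t) ⬝ᵥ A *ᵥ (v t)) - c * ((v t) ⬝ᵥ B *ᵥ (v t)) = 0
    rw [hv]
    linear_combination d*eA - c*eB + (Real.cos t)^2*hqhx + (Real.sin t)^2*hqhy
      + (2*Real.cos t*γ t)*hBxw + (2*Real.sin t*γ t)*hByw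
      + (2*Real.sin t*Real.cos t)*hrw
  · -- nonzero
    intro t ht hzero
    exact hnz (Real.cos t) (Real.sin t) (γ t) (Real.cos_sq_add_sin_sq t) hzero
  · rw [hv0]; exact hstart
  · rw [hvT]; exact hend


lemma exists_w (hm : 3 ≤ m) (h : Matrix (Fin m) (Fin m) ℝ) (x y : Fin m → ℝ) :
    ∃ w : Fin m → ℝ, w ≠ 0 ∧ x ⬝ᵥ h *ᵥ w = 0 ∧ y ⬝ᵥ h *ᵥ w = 0 := by
  let L : (Fin m → ℝ) →ₗ[ℝ] ℝ × ℝ :=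
    { toFun := fun v => (x ⬝ᵥ h *ᵥ v, y ⬝ᵥ h *ᵥ v)
      map_add' := fun u v => by
        simp [Matrix.mulVec_add, dotProduct_add, Prod.ext_iff]
      map_smul' := fun c v => by
        simp [Matrix.mulVec_smul, dotProduct_smul, Prod.ext_iff] }
  have hrk := L.finrank_range_add_finrank_ker
  have h1 : Module.finrank ℝ (LinearMap.range L) ≤ 2 := by
    have := Submodule.finrank_le (LinearMap.range L)
    simpa using this
  have h2 : Module.finrank ℝ (Fin m → ℝ) = m := by simp
  have hker : 0 < Module.finrank ℝ (LinearMap.ker L) := by omega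
  obtain ⟨⟨w, hw⟩, hw0⟩ := Module.finrank_pos_iff_exists_ne_zero.mp hker
  refine ⟨w, ?_, ?_, ?_⟩
  · intro h0
    apply hw0
    ext
    simp [h0]
  · exact congrArg Prod.fst (LinearMap.mem_ker.mp hw)
  · exact congrArg Prod.snd (LinearMap.mem_ker.mp hw)

set_option maxHeartbeats 2000000 in
lemma no_antipodal (hm : 3 ≤ m) (A B : Matrix (Fin m) (Fin m) ℝ)
    (hA : A.IsSymm) (hB : B.IsSymm)
    (h0 : ∀ v, v ⬝ᵥ A *ᵥ v = 0 → v ⬝ᵥ B *ᵥ v = 0 → v = 0)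
    (x y : Fin m → ℝ) (hx : x ≠ 0) (hy : y ≠ 0) (s : ℝ) (hs : 0 < s)
    (hsA : y ⬝ᵥ A *ᵥ y = -(s * (x ⬝ᵥ A *ᵥ x)))
    (hsB : y ⬝ᵥ B *ᵥ y = -(s * (x ⬝ᵥ B *ᵥ x))) : False := by
  set c := x ⬝ᵥ A *ᵥ x with hc
  set d := x ⬝ᵥ B *ᵥ x with hd
  have hcd : ¬ (c = 0 ∧ d = 0) := by
    rintro ⟨h1, h2⟩
    exact hx (h0 x h1 h2)
  have hK : 0 < c^2 + d^2 := by
    rcases not_and_or.mp hcd with h | h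
    · have : 0 < c^2 := lt_of_le_of_ne (sq_nonneg c) (Ne.symm (pow_ne_zero 2 h))
      nlinarith [sq_nonneg d]
    · have : 0 < d^2 := lt_of_le_of_ne (sq_nonneg d) (Ne.symm (pow_ne_zero 2 h))
      nlinarith [sq_nonneg c]
  -- pairing helper
  have pair : ∀ (u z1 z2 z3 : Fin m → ℝ) (a b g : ℝ), a • z1 + b • z2 + g • z3 = 0 →
      a*(d*(u ⬝ᵥ A *ᵥ z1) - c*(u ⬝ᵥ B *ᵥ z1)) + b*(d*(u ⬝ᵥ A *ᵥ z2) - c*(u ⬝ᵥ B *ᵥ z2))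
        + g*(d*(u ⬝ᵥ A *ᵥ z3) - c*(u ⬝ᵥ B *ᵥ z3)) = 0 := by
    intro u z1 z2 z3 a b g hz
    have h1 : u ⬝ᵥ A *ᵥ (a•z1+b•z2+g•z3) = 0 := by rw [hz]; simp
    have h2 : u ⬝ᵥ B *ᵥ (a•z1+b•z2+g•z3) = 0 := by rw [hz]; simp
    rw [dot_comb3] at h1 h2
    linear_combination d*h1 - c*h2
  -- basic values
  have hqhx : d * (x ⬝ᵥ A *ᵥ x) - c * (x ⬝ᵥ B *ᵥ x) = 0 := by rw [← hc, ← hd]; ring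
  have hqhy : d * (y ⬝ᵥ A *ᵥ y) - c * (y ⬝ᵥ B *ᵥ y) = 0 := by
    rw [hsA, hsB]; ring
  have hstartx : 0 < c * (x ⬝ᵥ A *ᵥ x) + d * (x ⬝ᵥ B *ᵥ x) := by
    rw [← hc, ← hd]; nlinarith
  have hendy : c * (y ⬝ᵥ A *ᵥ y) + d * (y ⬝ᵥ B *ᵥ y) < 0 := by
    rw [hsA, hsB]; nlinarith
  set Bxy := d * (x ⬝ᵥ A *ᵥ y) - c * (x ⬝ᵥ B *ᵥ y) with hBxy
  by_cases hB0 : Bxy = 0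
  · -- direct arc from x to y
    apply path_case A B hA hB h0 c d hcd x y 0 0 le_rfl hqhx hqhy (by simp) (by simp)
      (by rw [zero_mul, ← hBxy, hB0, neg_zero]) ?_ hstartx hendy
    intro a b g hab hzero
    have h7 : a • x = (-b) • y := by
      rw [neg_smul]
      have h8 : a • x + b • y = 0 := by simpa using hzero
      exact eq_neg_of_add_eq_zero_left h8
    have e1 : a^2 * c = b^2 * (-(s*c)) := by
      calc a^2 * c = (a•x) ⬝ᵥ A *ᵥ (a•x) := (quad_smul A x a).symm
        _ = ((-b)•y) ⬝ᵥ A *ᵥ ((-b)•y) := by rw [h7]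
        _ = (-b)^2 * (y ⬝ᵥ A *ᵥ y) := quad_smul A y (-b)
        _ = b^2 * (-(s*c)) := by rw [hsA]; ring
    have e2 : a^2 * d = b^2 * (-(s*d)) := by
      calc a^2 * d = (a•x) ⬝ᵥ B *ᵥ (a•x) := (quad_smul B x a).symm
        _ = ((-b)•y) ⬝ᵥ B *ᵥ ((-b)•y) := by rw [h7]
        _ = (-b)^2 * (y ⬝ᵥ B *ᵥ y) := quad_smul B y (-b)
        _ = b^2 * (-(s*d)) := by rw [hsB]; ring
    have e3 : (a^2 + s*b^2)*(c^2+d^2) = 0 := by linear_combination c*e1 + d*e2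
    have e4 : a^2 + s*b^2 = 0 := by
      rcases mul_eq_zero.mp e3 with h | h
      · exact h
      · exact absurd h hK.ne'
    have ha2 : a^2 = 0 := by nlinarith [mul_nonneg hs.le (sq_nonneg b)]
    have hb2 : b^2 = 0 := by
      have hsb : s * b^2 = 0 := by linarith
      rcases mul_eq_zero.mp hsb with h | h
      · exact absurd h hs.ne'
      · exact h
    nlinarith [hab]
  · -- Bxy ≠ 0 : find w orthogonal (w.r.t. the form h) to x and y
    have hconv : ∀ u z : Fin m → ℝ,
        u ⬝ᵥ (d•A + (-c)•B) *ᵥ z = d*(u ⬝ᵥ A *ᵥ z) - c*(u ⬝ᵥ B *ᵥ z) := by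
      intro u z
      simp only [Matrix.add_mulVec, Matrix.smul_mulVec, dotProduct_add,
        dotProduct_smul, smul_eq_mul, neg_mul]
      ring
    obtain ⟨w, hw0, hxw, hyw⟩ := exists_w hm (d•A + (-c)•B) x y
    rw [hconv] at hxw hyw
    set cw := d * (w ⬝ᵥ A *ᵥ w) - c * (w ⬝ᵥ B *ᵥ w) with hcwdef
    -- symmetrized versions
    have swx : d * (w ⬝ᵥ A *ᵥ x) - c * (w ⬝ᵥ B *ᵥ x) = 0 := by
      rw [dot_symm A hA w x, dot_symm B hB w x]; exact hxw
    have swy : d * (w ⬝ᵥ A *ᵥ y) - c * (w ⬝ᵥ B *ᵥ y) = 0 := by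
      rw [dot_symm A hA w y, dot_symm B hB w y]; exact hyw
    have syx : d * (y ⬝ᵥ A *ᵥ x) - c * (y ⬝ᵥ B *ᵥ x) = Bxy := by
      rw [dot_symm A hA y x, dot_symm B hB y x, hBxy]
    by_cases hcw : cw = 0
    · rcases lt_trichotomy (c * (w ⬝ᵥ A *ᵥ w) + d * (w ⬝ᵥ B *ᵥ w)) 0 with h1 | h1 | h1
      · -- arc from x to w
        apply path_case A B hA hB h0 c d hcd x w 0 0 le_rfl hqhx (by rw [← hcwdef]; exact hcw)
          (by simp) (by simp) (by rw [zero_mul, hxw, neg_zero]) ?_ hstartx h1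
        intro a b g hab hzero
        have hp := pair y x w 0 a b g hzero
        simp only [Matrix.mulVec_zero, dotProduct_zero, mul_zero, sub_zero, add_zero,
          zero_mul] at hp
        rw [syx, hyw] at hp
        have ha : a = 0 := by
          have : a * Bxy = 0 := by linarith
          exact (mul_eq_zero.mp this).resolve_right hB0
        have hb : b ≠ 0 := by
          intro hb
          rw [ha, hb] at hab
          norm_num at hab
        apply hw0
        have : b • w = 0 := by
          have := hzero
          rw [ha] at this
          simpa using this
        exact (smul_eq_zero.mp this).resolve_left hb
      · -- w is a common zero
        have hqAw : w ⬝ᵥ A *ᵥ w = 0 := by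
          have h5 : (c^2 + d^2) * (w ⬝ᵥ A *ᵥ w) = 0 := by
            rw [hcwdef] at hcw
            linear_combination c * h1 + d * hcw
          exact (mul_eq_zero.mp h5).resolve_left hK.ne'
        have hqBw : w ⬝ᵥ B *ᵥ w = 0 := by
          have h5 : (c^2 + d^2) * (w ⬝ᵥ B *ᵥ w) = 0 := by
            rw [hcwdef] at hcw
            linear_combination d * h1 - c * hcw
          exact (mul_eq_zero.mp h5).resolve_left hK.ne'
        exact hw0 (h0 w hqAw hqBw)
      · -- arc from w to y
        apply path_case A B hA hB h0 c d hcd w y 0 0 le_rfl (by rw [← hcwdef]; exact hcw) hqhy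
          (by simp) (by simp) (by rw [zero_mul, swy, neg_zero]) ?_ h1 hendy
        intro a b g hab hzero
        have hp := pair x w y 0 a b g hzero
        simp only [Matrix.mulVec_zero, dotProduct_zero, mul_zero, sub_zero, add_zero,
          zero_mul] at hp
        rw [hxw, ← hBxy] at hp
        have hb : b = 0 := by
          have : b * Bxy = 0 := by linarith
          exact (mul_eq_zero.mp this).resolve_right hB0
        have ha : a ≠ 0 := by
          intro ha
          rw [ha, hb] at hab
          norm_num at hab
        apply hw0
        have : a • w = 0 := by
          have := hzero
          rw [hb] at this
          simpa using this
        exact (smul_eq_zero.mp this).resolve_left ha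
    · -- generic case: cw ≠ 0, choose sign ε and a curved path
      obtain ⟨ε, hε2, hsign⟩ : ∃ ε : ℝ, ε^2 = 1 ∧ (ε*Bxy)*cw < 0 := by
        rcases lt_trichotomy (Bxy * cw) 0 with h1 | h1 | h1
        · exact ⟨1, by norm_num, by nlinarith⟩
        · exact absurd h1 (mul_ne_zero hB0 hcw)
        · exact ⟨-1, by norm_num, by nlinarith⟩
      have hεne : ε ≠ 0 := by
        intro h
        rw [h] at hε2
        norm_num at hε2
      set yb := ε • y with hyb
      -- dot products with yb
      have dxyA : x ⬝ᵥ A *ᵥ yb = ε * (x ⬝ᵥ A *ᵥ y) := by rw [hyb]; simp [Matrix.mulVec_smul]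
      have dxyB : x ⬝ᵥ B *ᵥ yb = ε * (x ⬝ᵥ B *ᵥ y) := by rw [hyb]; simp [Matrix.mulVec_smul]
      have hqhyb : d * (yb ⬝ᵥ A *ᵥ yb) - c * (yb ⬝ᵥ B *ᵥ yb) = 0 := by
        rw [hyb, quad_smul A y ε, quad_smul B y ε]
        linear_combination ε^2 * hqhy
      have hBywb : d * (yb ⬝ᵥ A *ᵥ w) - c * (yb ⬝ᵥ B *ᵥ w) = 0 := by
        rw [hyb]
        simp only [smul_dotProduct, smul_eq_mul]
        linear_combination ε * hyw
      have hendyb : c * (yb ⬝ᵥ A *ᵥ yb) + d * (yb ⬝ᵥ B *ᵥ yb) < 0 := by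
        rw [hyb, quad_smul A y ε, quad_smul B y ε, hε2]
        simpa using hendy
      set B' := ε * Bxy with hB'
      have hB'ne : B' ≠ 0 := mul_ne_zero hεne hB0
      set r := -(B'/cw) with hr
      have hsign' : B' * cw < 0 := by rw [hB']; exact hsign
      have hrpos : 0 < r := by
        have h9 : B'/cw = (B'*cw)/cw^2 := by
          field_simp
        have h10 : (B'*cw)/cw^2 < 0 := div_neg_of_neg_of_pos hsign' (by positivity)
        rw [hr, h9]
        linarith
      have F1 : d*(yb ⬝ᵥ A *ᵥ x) - c*(yb ⬝ᵥ B *ᵥ x) = B' := by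
        rw [hyb, hB']
        simp only [smul_dotProduct, smul_eq_mul]
        linear_combination ε*syx
      have F2 : d*(x ⬝ᵥ A *ᵥ yb) - c*(x ⬝ᵥ B *ᵥ yb) = B' := by
        rw [dxyA, dxyB, hB']
        linear_combination -ε*hBxy
      apply path_case A B hA hB h0 c d hcd x yb w r hrpos.le hqhx hqhyb hxw hBywb ?_ ?_
        hstartx hendyb
      · -- hrw
        rw [← hcwdef]
        have h10 : r * cw = -B' := by
          rw [hr]
          field_simp
        linear_combination h10 + F2
      · intro a b g hab hz
        have hp1 := pair yb x yb w a b g hz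
        have ha0 : a * B' = 0 := by linear_combination hp1 - a*F1 - b*hqhyb - g*hBywb
        have ha : a = 0 := (mul_eq_zero.mp ha0).resolve_right hB'ne
        have hp2 := pair x x yb w a b g hz
        have hb0 : b * B' = 0 := by linear_combination hp2 - b*F2 - a*hqhx - g*hxw
        have hb : b = 0 := (mul_eq_zero.mp hb0).resolve_right hB'ne
        rw [ha, hb] at hab
        norm_num at hab

set_option maxHeartbeats 1000000 in
lemma calabi (hm : 3 ≤ m) (A B : Matrix (Fin m) (Fin m) ℝ)
    (hA : A.IsSymm) (hB : B.IsSymm)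
    (h0 : ∀ v, v ⬝ᵥ A *ᵥ v = 0 → v ⬝ᵥ B *ᵥ v = 0 → v = 0) :
    ∃ a b : ℝ, ((a • A + b • B) : Matrix (Fin m) (Fin m) ℝ).PosDef := by
  set S := Metric.sphere (0 : Fin m → ℝ) 1 with hS
  have hScon : IsConnected S := by
    apply isConnected_sphere ?_ 0 zero_le_one
    rw [rank_fin_fun]
    exact_mod_cast (by omega : 1 < m)
  have hScomp : IsCompact S := isCompact_sphere 0 1
  set nrm : (Fin m → ℝ) → ℝ :=
    fun v => Real.sqrt ((v ⬝ᵥ A *ᵥ v)^2 + (v ⬝ᵥ B *ᵥ v)^2) with hnrm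
  have hnrm_cont : Continuous nrm := Real.continuous_sqrt.comp
    (((quad_continuous' A).pow 2).add ((quad_continuous' B).pow 2))
  have hnrm_pos : ∀ v : Fin m → ℝ, v ≠ 0 → 0 < nrm v := by
    intro v hv
    apply Real.sqrt_pos.mpr
    rcases not_and_or.mp (fun h : _ ∧ _ => hv (h0 v h.1 h.2)) with h | h
    · have : 0 < (v ⬝ᵥ A *ᵥ v)^2 := lt_of_le_of_ne (sq_nonneg _) (Ne.symm (pow_ne_zero 2 h))
      nlinarith [sq_nonneg (v ⬝ᵥ B *ᵥ v)]
    · have : 0 < (v ⬝ᵥ B *ᵥ v)^2 := lt_of_le_of_ne (sq_nonneg _) (Ne.symm (pow_ne_zero 2 h))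
      nlinarith [sq_nonneg (v ⬝ᵥ A *ᵥ v)]
  have hSne : ∀ v ∈ S, v ≠ (0 : Fin m → ℝ) := by
    intro v hv
    rw [hS, Metric.mem_sphere] at hv
    intro h
    rw [h] at hv
    simp at hv
  set ψ : (Fin m → ℝ) → ℝ × ℝ :=
    fun v => ((v ⬝ᵥ A *ᵥ v) / nrm v, (v ⬝ᵥ B *ᵥ v) / nrm v) with hψ
  set C := ψ '' S with hC
  set T := {p : ℝ × ℝ | p.1^2 + p.2^2 = 1} with hT
  have hCT : C ⊆ T := by
    rintro p ⟨v, hvS, rfl⟩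
    have hv0 := hSne v hvS
    have hn := hnrm_pos v hv0
    have h2 : nrm v ^ 2 = (v ⬝ᵥ A *ᵥ v)^2 + (v ⬝ᵥ B *ᵥ v)^2 := by
      rw [hnrm]
      exact Real.sq_sqrt (by positivity)
    show ((v ⬝ᵥ A *ᵥ v) / nrm v)^2 + ((v ⬝ᵥ B *ᵥ v) / nrm v)^2 = 1
    rw [div_pow, div_pow, ← add_div, ← h2, div_self (by positivity)]
  have hψcont : ContinuousOn ψ S := by
    apply ContinuousOn.prodMk
    · exact (quad_continuous' A).continuousOn.div hnrm_cont.continuousOn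
        (fun v hv => (hnrm_pos v (hSne v hv)).ne')
    · exact (quad_continuous' B).continuousOn.div hnrm_cont.continuousOn
        (fun v hv => (hnrm_pos v (hSne v hv)).ne')
  have hCconn : IsConnected C := hScon.image ψ hψcont
  have hCcomp : IsCompact C := hScomp.image_of_continuousOn hψcont
  have hCanti : ∀ p ∈ C, -p ∉ C := by
    rintro p ⟨v, hvS, rfl⟩ ⟨u, huS, hu⟩
    have hv0 := hSne v hvS
    have hu0 := hSne u huS
    have hnv := hnrm_pos v hv0
    have hnu := hnrm_pos u hu0
    have e1 : (u ⬝ᵥ A *ᵥ u) / nrm u = -((v ⬝ᵥ A *ᵥ v) / nrm v) := congrArg Prod.fst hu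
    have e2 : (u ⬝ᵥ B *ᵥ u) / nrm u = -((v ⬝ᵥ B *ᵥ v) / nrm v) := congrArg Prod.snd hu
    apply no_antipodal hm A B hA hB h0 v u hv0 hu0 (nrm u / nrm v) (by positivity)
    · rw [div_eq_iff hnu.ne'] at e1
      rw [e1]
      ring
    · rw [div_eq_iff hnu.ne'] at e2
      rw [e2]
      ring
  obtain ⟨c₀, hc₀⟩ := hCconn.nonempty
  -- find p ∈ T with p ∉ C and -p ∉ C
  have hTconn : IsPreconnected T := by
    have hTr : T = Set.range (fun θ : ℝ => (Real.cos θ, Real.sin θ)) := by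
      ext p
      constructor
      · intro hp
        have hp' : p.1^2 + p.2^2 = 1 := hp
        set z : ℂ := ⟨p.1, p.2⟩ with hz
        have habs : ‖z‖ = 1 := by
          rw [Complex.norm_def, Complex.normSq_mk]
          rw [show p.1*p.1 + p.2*p.2 = 1 by nlinarith]
          exact Real.sqrt_one
        have hz0 : z ≠ 0 := by
          intro h
          rw [h] at habs
          simp at habs
        refine ⟨Complex.arg z, ?_⟩
        have hcos := Complex.cos_arg hz0
        have hsin := Complex.sin_arg z
        rw [habs] at hcos hsin
        simp only [div_one] at hcos hsin
        simp only [hcos, hsin]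
        rfl
      · rintro ⟨θ, rfl⟩
        show (Real.cos θ)^2 + (Real.sin θ)^2 = 1
        rw [Real.cos_sq_add_sin_sq]
    rw [hTr]
    exact (isConnected_range (by continuity)).isPreconnected
  have hTsymm : ∀ p ∈ T, -p ∈ T := by
    intro p hp
    have : p.1^2 + p.2^2 = 1 := hp
    show (-p).1^2 + (-p).2^2 = 1
    simp only [Prod.fst_neg, Prod.snd_neg, neg_sq]
    exact this
  obtain ⟨p, hpT, hpC, hpnC⟩ : ∃ p ∈ T, p ∉ C ∧ -p ∉ C := by
    by_contra hcon
    push_neg at hcon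
    set N := (fun q : ℝ × ℝ => -q) '' C with hN
    have hNclosed : IsClosed N := (hCcomp.image continuous_neg).isClosed
    have hTsub : T ⊆ C ∪ N := by
      intro q hq
      rcases em (q ∈ C) with h | h
      · exact Or.inl h
      · exact Or.inr ⟨-q, hcon q hq h, by simp⟩
    have key := isPreconnected_closed_iff.mp hTconn C N hCcomp.isClosed hNclosed hTsub
      ⟨c₀, hCT hc₀, hc₀⟩ ⟨-c₀, hTsymm c₀ (hCT hc₀), ⟨c₀, hc₀, rfl⟩⟩
    obtain ⟨q, _, hqC, q', hq'C, hqq'⟩ := key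
    have : -q ∈ C := by
      rw [← hqq']
      simpa using hq'C
    exact hCanti q hqC this
  -- linear functional positive on C
  have hgne : ∀ u ∈ C, -p.2 * u.1 + p.1 * u.2 ≠ 0 := by
    intro u huC hgu
    have huT : u.1^2 + u.2^2 = 1 := hCT huC
    have hpT' : p.1^2 + p.2^2 = 1 := hpT
    set t := u.1 * p.1 + u.2 * p.2 with ht
    have h1 : u.1 = t * p.1 := by linear_combination (-u.1)*hpT' + (-p.2)*hgu
    have h2 : u.2 = t * p.2 := by linear_combination (-u.2)*hpT' + p.1*hgu
    have h3 : t^2 = 1 := by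
      calc t^2 = t^2 * (p.1^2 + p.2^2) := by rw [hpT']; ring
        _ = u.1^2 + u.2^2 := by rw [h1, h2]; ring
        _ = 1 := huT
    have h4 : (t - 1) * (t + 1) = 0 := by linear_combination h3
    rcases mul_eq_zero.mp h4 with h5 | h5
    · have ht1 : t = 1 := by linarith
      have : u = p := Prod.ext_iff.mpr ⟨by rw [h1, ht1, one_mul], by rw [h2, ht1, one_mul]⟩
      rw [this] at huC
      exact hpC huC
    · have ht1 : t = -1 := by linarith
      have : u = -p := Prod.ext_iff.mpr ⟨by rw [h1, ht1]; simp, by rw [h2, ht1]; simp⟩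
      rw [this] at huC
      exact hpnC huC
  have hgcont : Continuous (fun u : ℝ × ℝ => -p.2 * u.1 + p.1 * u.2) := (continuous_const.mul continuous_fst).add (continuous_const.mul continuous_snd)
  obtain ⟨a, b, hpos⟩ : ∃ a b : ℝ, ∀ u ∈ C, 0 < a * u.1 + b * u.2 := by
    rcases lt_or_gt_of_ne (hgne c₀ hc₀) with h | h
    · refine ⟨p.2, -p.1, fun u huC => ?_⟩
      rcases lt_or_gt_of_ne (hgne u huC) with h' | h'
      · linarith
      · exfalso
        have hIcc : (0:ℝ) ∈ Icc (-p.2 * c₀.1 + p.1 * c₀.2) (-p.2 * u.1 + p.1 * u.2) :=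
          ⟨le_of_lt h, le_of_lt h'⟩
        obtain ⟨z, hzC, hz⟩ := hCconn.isPreconnected.intermediate_value hc₀ huC
          hgcont.continuousOn hIcc
        exact hgne z hzC hz
    · refine ⟨-p.2, p.1, fun u huC => ?_⟩
      rcases lt_or_gt_of_ne (hgne u huC) with h' | h'
      · exfalso
        have hIcc : (0:ℝ) ∈ Icc (-p.2 * u.1 + p.1 * u.2) (-p.2 * c₀.1 + p.1 * c₀.2) :=
          ⟨le_of_lt h', le_of_lt h⟩
        obtain ⟨z, hzC, hz⟩ := hCconn.isPreconnected.intermediate_value huC hc₀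
          hgcont.continuousOn hIcc
        exact hgne z hzC hz
      · linarith
  refine ⟨a, b, Matrix.PosDef.of_dotProduct_mulVec_pos ?_ ?_⟩
  · show ((a • A + b • B) : Matrix (Fin m) (Fin m) ℝ)ᴴ = a • A + b • B
    rw [conjTranspose_eq_transpose_of_trivial, transpose_add, transpose_smul, transpose_smul,
      hA.eq, hB.eq]
  · intro v hv
    have hstar : star v = v := by
      funext i
      simp
    rw [hstar]
    have hdot : v ⬝ᵥ (a • A + b • B) *ᵥ v = a * (v ⬝ᵥ A *ᵥ v) + b * (v ⬝ᵥ B *ᵥ v) := by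
      simp only [Matrix.add_mulVec, Matrix.smul_mulVec, dotProduct_add,
        dotProduct_smul, smul_eq_mul]
    show (0:ℝ) < v ⬝ᵥ (a • A + b • B) *ᵥ v
    rw [hdot]
    -- normalize v
    have hnv : (0:ℝ) < ‖v‖ := norm_pos_iff.mpr hv
    set vh := ‖v‖⁻¹ • v with hvh
    have hvhS : vh ∈ S := by
      rw [hS, Metric.mem_sphere, dist_zero_right, hvh, norm_smul, norm_inv, norm_norm]
      exact inv_mul_cancel₀ hnv.ne'
    have hψC : ψ vh ∈ C := mem_image_of_mem ψ hvhS
    have hposh := hpos (ψ vh) hψC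
    have hnvh := hnrm_pos vh (hSne vh hvhS)
    simp only [hψ] at hposh
    rw [mul_div_assoc', mul_div_assoc', ← add_div] at hposh
    have hnum : 0 < a * (vh ⬝ᵥ A *ᵥ vh) + b * (vh ⬝ᵥ B *ᵥ vh) := by
      rcases div_pos_iff.mp hposh with ⟨h1, _⟩ | ⟨_, h2⟩
      · exact h1
      · linarith
    rw [hvh, quad_smul A v (‖v‖⁻¹), quad_smul B v (‖v‖⁻¹)] at hnum
    have hsq : (0:ℝ) < (‖v‖⁻¹)^2 := by positivity
    nlinarith [hnum, hsq]

lemma sd (M N : Matrix (Fin m) (Fin m) ℝ) (hM : M.PosDef) (hN : N.IsHermitian) :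
    ∃ C : Matrix (Fin m) (Fin m) ℝ, IsUnit C.det ∧ Cᵀ * M * C = 1 ∧ (Cᵀ * N * C).IsDiag := by
  obtain ⟨S, hSherm, hSS, hSdet⟩ :
      ∃ S : Matrix (Fin m) (Fin m) ℝ, S.IsHermitian ∧ S * S = M ∧ IsUnit S.det := by
    open scoped MatrixOrder in
    have hM0 : 0 ≤ M := hM.posSemidef.nonneg
    open scoped MatrixOrder in
    refine ⟨CFC.sqrt M, (CFC.sqrt_nonneg M).posSemidef.1, CFC.sqrt_mul_sqrt_self M hM0, ?_⟩
    open scoped MatrixOrder in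
    have hd : (CFC.sqrt M).det * (CFC.sqrt M).det = M.det := by
      rw [← Matrix.det_mul, CFC.sqrt_mul_sqrt_self M hM0]
    have hMdet : M.det ≠ 0 := ne_of_gt hM.det_pos
    refine isUnit_iff_ne_zero.mpr fun h => hMdet ?_
    rw [← hd, h, mul_zero]
  have hST : Sᵀ = S := by
    have := hSherm
    rwa [Matrix.IsHermitian, conjTranspose_eq_transpose_of_trivial] at this
  have hSinv : S⁻¹ * S = 1 := Matrix.nonsing_inv_mul S hSdet
  have hSinv' : S * S⁻¹ = 1 := Matrix.mul_nonsing_inv S hSdet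
  have hSinvT : (S⁻¹)ᵀ = S⁻¹ := by rw [Matrix.transpose_nonsing_inv, hST]
  set Nm := S⁻¹ * N * S⁻¹ with hNm
  have hNmherm : Nm.IsHermitian := by
    rw [Matrix.IsHermitian, hNm, conjTranspose_eq_transpose_of_trivial,
      Matrix.transpose_mul, Matrix.transpose_mul, hSinvT]
    rw [show Nᵀ = N by rw [← conjTranspose_eq_transpose_of_trivial]; exact hN.eq]
    rw [Matrix.mul_assoc]
  set U : Matrix (Fin m) (Fin m) ℝ := (hNmherm.eigenvectorUnitary : Matrix (Fin m) (Fin m) ℝ)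
    with hU
  have hUstar : star U * U = 1 := by
    rw [hU]
    exact Unitary.coe_star_mul_self hNmherm.eigenvectorUnitary
  have hUT : Uᵀ = star U := by
    rw [Matrix.star_eq_conjTranspose, conjTranspose_eq_transpose_of_trivial]
  have hdiag : star U * Nm * U = Matrix.diagonal (RCLike.ofReal ∘ hNmherm.eigenvalues) :=
    by have := hNmherm.conjStarAlgAut_star_eigenvectorUnitary
       rwa [Unitary.conjStarAlgAut_star_apply] at this
  have hUdet : IsUnit U.det := by
    have h1 : (star U).det * U.det = 1 := by
      rw [← Matrix.det_mul, hUstar, Matrix.det_one]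
    exact IsUnit.of_mul_eq_one _ (by rw [mul_comm]; exact h1)
  refine ⟨S⁻¹ * U, ?_, ?_, ?_⟩
  · rw [Matrix.det_mul]
    exact (Matrix.isUnit_nonsing_inv_det S hSdet).mul hUdet
  · have : (S⁻¹ * U)ᵀ * M * (S⁻¹ * U) = Uᵀ * (S⁻¹ * (S * S) * S⁻¹) * U := by
      rw [Matrix.transpose_mul, hSinvT, hSS]
      noncomm_ring
    rw [this, ← Matrix.mul_assoc S⁻¹ S S, hSinv, Matrix.one_mul, hSinv', hUT,
      Matrix.mul_one, hUstar]
  · have : (S⁻¹ * U)ᵀ * N * (S⁻¹ * U) = star U * Nm * U := by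
      rw [Matrix.transpose_mul, hSinvT, hUT, hNm]
      noncomm_ring
    rw [this, hdiag]
    exact Matrix.isDiag_diagonal _

lemma isHermitian_of_isSymm {A : Matrix (Fin m) (Fin m) ℝ} (hA : A.IsSymm) : A.IsHermitian := by
  rw [Matrix.IsHermitian, conjTranspose_eq_transpose_of_trivial]
  exact hA

lemma pair_diag (hm : 3 ≤ m) (A B : Matrix (Fin m) (Fin m) ℝ)
    (hA : A.IsSymm) (hB : B.IsSymm)
    (h0 : ∀ v, v ⬝ᵥ A *ᵥ v = 0 → v ⬝ᵥ B *ᵥ v = 0 → v = 0) :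
    ∃ C : Matrix (Fin m) (Fin m) ℝ, IsUnit C.det ∧ (Cᵀ * A * C).IsDiag ∧ (Cᵀ * B * C).IsDiag := by
  obtain ⟨a, b, hPD⟩ := calabi hm A B hA hB h0
  by_cases hb : b = 0
  · have ha : a ≠ 0 := by
      intro ha
      rw [ha, hb] at hPD
      have hne : (0 : Fin m → ℝ) ≠ (fun _ => 1) := by
        intro h
        have := congrFun h ⟨0, by omega⟩
        norm_num at this
      have := hPD.dotProduct_mulVec_pos (x := fun _ => 1) (Ne.symm hne)
      simp at this
    obtain ⟨C, hCdet, hCM, hCN⟩ := sd (a • A + b • B) B hPD (isHermitian_of_isSymm hB)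
    refine ⟨C, hCdet, ?_, hCN⟩
    have hexp : Cᵀ * (a • A + b • B) * C = a • (Cᵀ * A * C) + b • (Cᵀ * B * C) := by
      rw [Matrix.mul_add, Matrix.add_mul]
      congr 1 <;> rw [Matrix.mul_smul, Matrix.smul_mul]
    rw [hexp, hb, zero_smul, add_zero] at hCM
    have : Cᵀ * A * C = a⁻¹ • (1 : Matrix (Fin m) (Fin m) ℝ) := by
      rw [← hCM, smul_smul, inv_mul_cancel₀ ha, one_smul]
    rw [this]
    exact (Matrix.isDiag_one (n := Fin m)).smul a⁻¹
  · obtain ⟨C, hCdet, hCM, hCN⟩ := sd (a • A + b • B) A hPD (isHermitian_of_isSymm hA)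
    refine ⟨C, hCdet, hCN, ?_⟩
    have hexp : Cᵀ * (a • A + b • B) * C = a • (Cᵀ * A * C) + b • (Cᵀ * B * C) := by
      rw [Matrix.mul_add, Matrix.add_mul]
      congr 1 <;> rw [Matrix.mul_smul, Matrix.smul_mul]
    rw [hexp] at hCM
    have : Cᵀ * B * C = b⁻¹ • ((1 : Matrix (Fin m) (Fin m) ℝ) - a • (Cᵀ * A * C)) := by
      rw [← hCM, add_sub_cancel_left, smul_smul, inv_mul_cancel₀ hb, one_smul]
    rw [this]
    exact ((Matrix.isDiag_one (n := Fin m)).sub (hCN.smul a)).smul b⁻¹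

lemma conj_entry {n : ℕ} (P X : Matrix (Fin n) (Fin n) ℝ) (i j : Fin n) :
    (Pᵀ * X * P) i j = (fun r => P r i) ⬝ᵥ X *ᵥ (fun r => P r j) := by
  simp only [Matrix.mul_apply, dotProduct, Matrix.mulVec, Matrix.transpose_apply,
    Finset.sum_mul, Finset.mul_sum]
  rw [Finset.sum_comm]
  apply Finset.sum_congr rfl
  intro r _
  apply Finset.sum_congr rfl
  intro s _
  ring

lemma dot_sum_left {n m : ℕ} (z : Fin n → ℝ) (f : Fin m → Fin n → ℝ) :
    (∑ i, f i) ⬝ᵥ z = ∑ i, f i ⬝ᵥ z := by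
  simp only [dotProduct, Finset.sum_apply, Finset.sum_mul]
  exact Finset.sum_comm

lemma dot_sum_right {n m : ℕ} (z : Fin n → ℝ) (f : Fin m → Fin n → ℝ) :
    z ⬝ᵥ (∑ i, f i) = ∑ i, z ⬝ᵥ f i := by
  simp only [dotProduct, Finset.sum_apply, Finset.mul_sum]
  exact Finset.sum_comm

lemma quad_entry {m : ℕ} (M : Matrix (Fin m) (Fin m) ℝ) (w : Fin m → ℝ) :
    w ⬝ᵥ M *ᵥ w = ∑ i, ∑ j, w i * w j * M i j := by
  simp only [dotProduct, Matrix.mulVec, Finset.mul_sum]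
  exact Finset.sum_congr rfl fun i _ => Finset.sum_congr rfl fun j _ => by ring

lemma quad_sum {n m : ℕ} (A : Matrix (Fin n) (Fin n) ℝ) (c : Fin m → Fin n → ℝ)
    (w : Fin m → ℝ) :
    (∑ i, w i • c i) ⬝ᵥ A *ᵥ (∑ i, w i • c i) = ∑ i, ∑ j, w i * w j * (c i ⬝ᵥ A *ᵥ c j) := by
  have h1 : A *ᵥ (∑ i, w i • c i) = ∑ j, w j • (A *ᵥ c j) := by
    rw [← Matrix.mulVecLin_apply, map_sum]
    refine Finset.sum_congr rfl fun i _ => ?_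
    rw [A.mulVecLin.map_smul, Matrix.mulVecLin_apply]
  calc (∑ i, w i • c i) ⬝ᵥ A *ᵥ (∑ i, w i • c i)
      = ∑ j, w j * ((∑ i, w i • c i) ⬝ᵥ (A *ᵥ c j)) := by
        rw [h1, dot_sum_right]
        exact Finset.sum_congr rfl fun j _ => by
          rw [dotProduct_smul, smul_eq_mul]
    _ = ∑ j, ∑ i, w i * w j * (c i ⬝ᵥ A *ᵥ c j) := by
        refine Finset.sum_congr rfl fun j _ => ?_
        rw [dot_sum_left, Finset.mul_sum]
        exact Finset.sum_congr rfl fun i _ => by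
          rw [smul_dotProduct, smul_eq_mul]; ring
    _ = ∑ i, ∑ j, w i * w j * (c i ⬝ᵥ A *ᵥ c j) := Finset.sum_comm

lemma isDiag_submatrix {I J : Type*} (M : Matrix I I ℝ) (f : J → I) (hf : Function.Injective f)
    (hM : M.IsDiag) : (M.submatrix f f).IsDiag := by
  intro i j hij
  exact hM (fun h => hij (hf h))


end SDCProof

/-- if `Q(A) ∩ Q(B) = N(A) ∩ N(B)` and `dim(N(A) ∩ N(B)) ≤ n − 3`, then
`A` and `B` are simultaneously diagonalizable via congruence. -/
theorem stmt_10 {n : ℕ} (A B : Matrix (Fin n) (Fin n) ℝ)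
    (hA : A.IsSymm) (hB : B.IsSymm)
    (hQN : ∀ v : Fin n → ℝ,
      (v ⬝ᵥ A *ᵥ v = 0 ∧ v ⬝ᵥ B *ᵥ v = 0) ↔ (A *ᵥ v = 0 ∧ B *ᵥ v = 0))
    (hdim : Module.finrank ℝ
      ↥(LinearMap.ker A.mulVecLin ⊓ LinearMap.ker B.mulVecLin) + 3 ≤ n) :
    ∃ C : Matrix (Fin n) (Fin n) ℝ, IsUnit C.det ∧ (Cᵀ * A * C).IsDiag ∧ (Cᵀ * B * C).IsDiag := by
  classical
  set K := LinearMap.ker A.mulVecLin ⊓ LinearMap.ker B.mulVecLin with hKdef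
  obtain ⟨W, hWc⟩ := Submodule.exists_isCompl K
  set k := Module.finrank ℝ K with hk
  set m := Module.finrank ℝ W with hmdef
  have hfin : k + m = n := by
    have h1 := Submodule.finrank_add_eq_of_isCompl hWc
    rwa [Module.finrank_fin_fun] at h1
  have hm3 : 3 ≤ m := by omega
  set bW := Module.finBasis ℝ W with hbW
  set bK := Module.finBasis ℝ K with hbK
  set e : Fin m ⊕ Fin k ≃ Fin n := finSumFinEquiv.trans (finCongr (by omega)) with he
  set bigB : Module.Basis (Fin m ⊕ Fin k) ℝ (Fin n → ℝ) :=
    (bW.prod bK).map (Submodule.prodEquivOfIsCompl W K hWc.symm) with hbigB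
  have hbig1 : ∀ i, bigB (Sum.inl i) = (bW i : Fin n → ℝ) := by
    intro i
    rw [hbigB, Module.Basis.map_apply, Submodule.coe_prodEquivOfIsCompl']
    rw [Module.Basis.prod_apply_inl_fst, Module.Basis.prod_apply_inl_snd]
    simp
  have hbig2 : ∀ i, bigB (Sum.inr i) = (bK i : Fin n → ℝ) := by
    intro i
    rw [hbigB, Module.Basis.map_apply, Submodule.coe_prodEquivOfIsCompl']
    rw [Module.Basis.prod_apply_inr_fst, Module.Basis.prod_apply_inr_snd]
    simp
  set bF : Module.Basis (Fin n) ℝ (Fin n → ℝ) := bigB.reindex e with hbF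
  set P : Matrix (Fin n) (Fin n) ℝ := (Pi.basisFun ℝ (Fin n)).toMatrix bF with hP
  have hPdet : IsUnit P.det := by
    letI := (Pi.basisFun ℝ (Fin n)).invertibleToMatrix bF
    exact Matrix.isUnit_det_of_invertible P
  have hPentry : ∀ i j, P i j = bF j i := by
    intro i j
    rw [hP, Module.Basis.toMatrix_apply, Pi.basisFun_repr]
  have hPcol : ∀ j, (fun r => P r j) = bigB (e.symm j) := by
    intro j
    funext r
    rw [hPentry, hbF, Module.Basis.reindex_apply]
  -- kernel columns are killed
  have hkerA : ∀ i, A *ᵥ (bK i : Fin n → ℝ) = 0 := by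
    intro i
    have h1 := (Submodule.mem_inf.mp (bK i).2).1
    rwa [LinearMap.mem_ker, Matrix.mulVecLin_apply] at h1
  have hkerB : ∀ i, B *ᵥ (bK i : Fin n → ℝ) = 0 := by
    intro i
    have h1 := (Submodule.mem_inf.mp (bK i).2).2
    rwa [LinearMap.mem_ker, Matrix.mulVecLin_apply] at h1
  -- restricted matrices
  set A' : Matrix (Fin m) (Fin m) ℝ :=
    Matrix.of fun i j => (bW i : Fin n → ℝ) ⬝ᵥ A *ᵥ (bW j : Fin n → ℝ) with hA'
  set B' : Matrix (Fin m) (Fin m) ℝ :=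
    Matrix.of fun i j => (bW i : Fin n → ℝ) ⬝ᵥ B *ᵥ (bW j : Fin n → ℝ) with hB'
  have hA'symm : A'.IsSymm := by
    apply Matrix.IsSymm.ext
    intro i j
    exact dot_symm A hA _ _
  have hB'symm : B'.IsSymm := by
    apply Matrix.IsSymm.ext
    intro i j
    exact dot_symm B hB _ _
  have h0' : ∀ w : Fin m → ℝ, w ⬝ᵥ A' *ᵥ w = 0 → w ⬝ᵥ B' *ᵥ w = 0 → w = 0 := by
    intro w hwA hwB
    set v : Fin n → ℝ := ∑ i, w i • (bW i : Fin n → ℝ) with hv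
    have hexpA : ∑ i, ∑ j, w i * w j * ((bW i : Fin n → ℝ) ⬝ᵥ A *ᵥ (bW j : Fin n → ℝ))
        = w ⬝ᵥ A' *ᵥ w := by rw [quad_entry]; rfl
    have hexpB : ∑ i, ∑ j, w i * w j * ((bW i : Fin n → ℝ) ⬝ᵥ B *ᵥ (bW j : Fin n → ℝ))
        = w ⬝ᵥ B' *ᵥ w := by rw [quad_entry]; rfl
    have hvA : v ⬝ᵥ A *ᵥ v = 0 := by
      rw [hv, quad_sum, hexpA]
      exact hwA
    have hvB : v ⬝ᵥ B *ᵥ v = 0 := by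
      rw [hv, quad_sum, hexpB]
      exact hwB
    have hvker := (hQN v).mp ⟨hvA, hvB⟩
    have hvK : v ∈ K := by
      rw [hKdef]
      exact Submodule.mem_inf.mpr ⟨LinearMap.mem_ker.mpr (by rw [Matrix.mulVecLin_apply]; exact hvker.1),
        LinearMap.mem_ker.mpr (by rw [Matrix.mulVecLin_apply]; exact hvker.2)⟩
    have hvW : v ∈ W := by
      rw [hv]
      exact Submodule.sum_mem W (fun i _ => Submodule.smul_mem W _ (bW i).2)
    have hv0 : v = 0 := by
      have h1 : v ∈ K ⊓ W := Submodule.mem_inf.mpr ⟨hvK, hvW⟩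
      rwa [hWc.inf_eq_bot, Submodule.mem_bot] at h1
    -- conclude w = 0 by linear independence
    have hsum : (∑ i, w i • bW i : W) = 0 := by
      apply Submodule.injective_subtype W
      have h3 : W.subtype (∑ i, w i • bW i) = v := by
        rw [map_sum, hv]
        exact Finset.sum_congr rfl fun i _ => by rw [LinearMap.map_smul]; rfl
      rw [h3, map_zero, hv0]
    have hli := Fintype.linearIndependent_iff.mp bW.linearIndependent w hsum
    funext i
    exact hli i
  obtain ⟨C', hC'det, hC'A, hC'B⟩ := pair_diag hm3 A' B' hA'symm hB'symm h0'
  -- assemble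
  set DD : Matrix (Fin m ⊕ Fin k) (Fin m ⊕ Fin k) ℝ :=
    Matrix.fromBlocks C' 0 0 1 with hDD
  set DDs : Matrix (Fin n) (Fin n) ℝ := DD.submatrix e.symm e.symm with hDDs
  set MA : Matrix (Fin m ⊕ Fin k) (Fin m ⊕ Fin k) ℝ := Matrix.fromBlocks A' 0 0 0 with hMA
  set MB : Matrix (Fin m ⊕ Fin k) (Fin m ⊕ Fin k) ℝ := Matrix.fromBlocks B' 0 0 0 with hMB
  have hPA : Pᵀ * A * P = MA.submatrix e.symm e.symm := by
    ext i j
    rw [conj_entry, hPcol, hPcol, Matrix.submatrix_apply]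
    rcases h1 : e.symm i with i' | i' <;> rcases h2 : e.symm j with j' | j'
    · rw [hbig1, hbig1]; rfl
    · rw [hbig2 j']
      show _ ⬝ᵥ A *ᵥ (bK j' : Fin n → ℝ) = (0 : Matrix (Fin m) (Fin k) ℝ) i' j'
      rw [hkerA j', dotProduct_zero]
      rfl
    · rw [hbig2 i']
      show (bK i' : Fin n → ℝ) ⬝ᵥ A *ᵥ _ = (0 : Matrix (Fin k) (Fin m) ℝ) i' j'
      rw [dot_symm A hA, hkerA i', dotProduct_zero]
      rfl
    · rw [hbig2 i']
      show (bK i' : Fin n → ℝ) ⬝ᵥ A *ᵥ _ = (0 : Matrix (Fin k) (Fin k) ℝ) i' j'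
      rw [dot_symm A hA, hkerA i', dotProduct_zero]
      rfl
  have hPB : Pᵀ * B * P = MB.submatrix e.symm e.symm := by
    ext i j
    rw [conj_entry, hPcol, hPcol, Matrix.submatrix_apply]
    rcases h1 : e.symm i with i' | i' <;> rcases h2 : e.symm j with j' | j'
    · rw [hbig1, hbig1]; rfl
    · rw [hbig2 j']
      show _ ⬝ᵥ B *ᵥ (bK j' : Fin n → ℝ) = (0 : Matrix (Fin m) (Fin k) ℝ) i' j'
      rw [hkerB j', dotProduct_zero]
      rfl
    · rw [hbig2 i']
      show (bK i' : Fin n → ℝ) ⬝ᵥ B *ᵥ _ = (0 : Matrix (Fin k) (Fin m) ℝ) i' j'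
      rw [dot_symm B hB, hkerB i', dotProduct_zero]
      rfl
    · rw [hbig2 i']
      show (bK i' : Fin n → ℝ) ⬝ᵥ B *ᵥ _ = (0 : Matrix (Fin k) (Fin k) ℝ) i' j'
      rw [dot_symm B hB, hkerB i', dotProduct_zero]
      rfl
  refine ⟨P * DDs, ?_, ?_, ?_⟩
  · rw [Matrix.det_mul]
    apply hPdet.mul
    rw [hDDs, Matrix.det_submatrix_equiv_self, hDD, Matrix.det_fromBlocks_zero₂₁,
      Matrix.det_one, mul_one]
    exact hC'det
  · have hcalc : (P * DDs)ᵀ * A * (P * DDs) = DDsᵀ * (Pᵀ * A * P) * DDs := by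
      rw [Matrix.transpose_mul]
      noncomm_ring
    rw [hcalc, hPA, hDDs, Matrix.transpose_submatrix]
    rw [Matrix.submatrix_mul_equiv, Matrix.submatrix_mul_equiv]
    apply isDiag_submatrix _ _ e.symm.injective
    rw [hDD, hMA, Matrix.fromBlocks_transpose, Matrix.fromBlocks_multiply,
      Matrix.fromBlocks_multiply]
    simp only [Matrix.mul_zero, Matrix.zero_mul, Matrix.mul_one, Matrix.one_mul,
      add_zero, zero_add, Matrix.transpose_zero, Matrix.transpose_one]
    exact Matrix.IsDiag.fromBlocks hC'A (fun i j _ => rfl)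
  · have hcalc : (P * DDs)ᵀ * B * (P * DDs) = DDsᵀ * (Pᵀ * B * P) * DDs := by
      rw [Matrix.transpose_mul]
      noncomm_ring
    rw [hcalc, hPB, hDDs, Matrix.transpose_submatrix]
    rw [Matrix.submatrix_mul_equiv, Matrix.submatrix_mul_equiv]
    apply isDiag_submatrix _ _ e.symm.injective
    rw [hDD, hMB, Matrix.fromBlocks_transpose, Matrix.fromBlocks_multiply,
      Matrix.fromBlocks_multiply]
    simp only [Matrix.mul_zero, Matrix.zero_mul, Matrix.mul_one, Matrix.one_mul,
      add_zero, zero_add, Matrix.transpose_zero, Matrix.transpose_one]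
    exact Matrix.IsDiag.fromBlocks hC'B (fun i j _ => rfl)
end

section
/- Consider (QP1QC) with data A, B, f, g, μ and assume the primal Slater condition holds. Then the objective F is unbounded below on the feasible set {x : G(x) ≤ μ} if and only if there is no σ ∈ ℝ satisfying: σ ≥ 0, A + σB is positive semidefinite, and f + σg lies in the range of A + σB (i.e., f + σg = (A + σB)w for some w ∈ ℝⁿ). -/
set_option maxHeartbeats 1000000


open Matrix

/-! ### Auxiliary elementary lemmas -/

private lemma quad_coeff_nonneg' {a b c : ℝ}
    (h : ∀ s : ℝ, 0 ≤ s → 0 ≤ a * s ^ 2 + b * s + c) : 0 ≤ a := by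
  by_contra ha
  push_neg at ha
  set s : ℝ := max ((|b| + |c| + 1) / (-a)) 1 with hs
  have hs1 : 1 ≤ s := le_max_right _ _
  have hs0 : (|b| + |c| + 1) / (-a) ≤ s := le_max_left _ _
  have h1 : a * s ≤ -(|b| + |c| + 1) := by
    rw [div_le_iff₀ (by linarith)] at hs0; nlinarith
  have h2 := h s (by linarith)
  nlinarith [le_abs_self b, le_abs_self c, neg_abs_le b, neg_abs_le c, abs_nonneg b, abs_nonneg c]

private lemma lin_coeff_zero' {b c : ℝ} (h : ∀ s : ℝ, 0 ≤ b * s + c) : b = 0 := by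
  by_contra hb
  have h1 := h (-(c + 1) / b)
  rw [mul_div_assoc', mul_comm, mul_div_assoc, div_self hb] at h1
  linarith

/-! ### Dines' theorem: the joint range of two real quadratic forms is convex -/

section DinesSec
variable {V : Type*} [AddCommGroup V] [Module ℝ V]

/-- The quadratic form associated to a bilinear map. -/
private def qf (Q : V →ₗ[ℝ] V →ₗ[ℝ] ℝ) (x : V) : ℝ := Q x x

private lemma qf_comb (Q : V →ₗ[ℝ] V →ₗ[ℝ] ℝ) (a b : ℝ) (u w : V) :
    qf Q (a • u + b • w) = a ^ 2 * qf Q u + a * b * (Q u w + Q w u) + b ^ 2 * qf Q w := by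
  simp [qf, map_add, LinearMap.map_smul, LinearMap.add_apply, LinearMap.smul_apply, smul_eq_mul]
  ring

private lemma qf_smul (Q : V →ₗ[ℝ] V →ₗ[ℝ] ℝ) (a : ℝ) (x : V) :
    qf Q (a • x) = a ^ 2 * qf Q x := by
  simp [qf, LinearMap.map_smul, LinearMap.smul_apply, smul_eq_mul]; ring

private lemma qf_neg (Q : V →ₗ[ℝ] V →ₗ[ℝ] ℝ) (x : V) : qf Q (-x) = qf Q x := by
  simp [qf]

private lemma qf_zero (Q : V →ₗ[ℝ] V →ₗ[ℝ] ℝ) : qf Q (0 : V) = 0 := by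
  simp [qf]

private lemma qf_smul_lin (Q Q' : V →ₗ[ℝ] V →ₗ[ℝ] ℝ) (a b : ℝ) (x : V) :
    qf (a • Q + b • Q') x = a * qf Q x + b * qf Q' x := by
  simp [qf, LinearMap.add_apply, LinearMap.smul_apply, smul_eq_mul]

private lemma dines_key (Qa Qb : V →ₗ[ℝ] V →ₗ[ℝ] ℝ) (u w : V) {e : ℝ} (he : 0 < e)
    (hu : qf Qb u = e) (hw : qf Qb w = e) (hβ : 0 ≤ Qb u w + Qb w u)
    {c : ℝ} (hc : c ∈ Set.uIcc (qf Qa u) (qf Qa w)) :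
    ∃ x : V, qf Qa x = c ∧ qf Qb x = e := by
  set α : ℝ := Qa u w + Qa w u with hα
  set β : ℝ := Qb u w + Qb w u with hβdef
  set N : ℝ → ℝ := fun t => (1 - t) ^ 2 * qf Qa u + (1 - t) * t * α + t ^ 2 * qf Qa w with hN
  set D : ℝ → ℝ := fun t => (1 - t) ^ 2 * e + (1 - t) * t * β + t ^ 2 * e with hD
  have huIcc : Set.uIcc (0:ℝ) 1 = Set.Icc 0 1 := Set.uIcc_of_le zero_le_one
  have hDpos : ∀ t ∈ Set.uIcc (0:ℝ) 1, 0 < D t := by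
    rw [huIcc]
    rintro t ⟨ht0, ht1⟩
    have h1 : 0 ≤ (1 - t) * t * β :=
      mul_nonneg (mul_nonneg (by linarith) ht0) hβ
    show 0 < (1 - t) ^ 2 * e + (1 - t) * t * β + t ^ 2 * e
    nlinarith [sq_nonneg (1 - 2 * t)]
  have hcont : ContinuousOn (fun t => e * N t / D t) (Set.uIcc (0:ℝ) 1) := by
    apply ContinuousOn.div
    · fun_prop
    · fun_prop
    · intro t ht; exact (hDpos t ht).ne'
  have hiv := intermediate_value_uIcc hcont
  have h0 : e * N 0 / D 0 = qf Qa u := by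
    simp only [hN, hD]; norm_num
    rw [mul_comm, mul_div_assoc, div_self he.ne', mul_one]
  have h1 : e * N 1 / D 1 = qf Qa w := by
    simp only [hN, hD]; norm_num
    rw [mul_comm, mul_div_assoc, div_self he.ne', mul_one]
  rw [h0, h1] at hiv
  obtain ⟨t, ht, hft⟩ := hiv hc
  set z : V := (1 - t) • u + t • w with hz
  have hNz : qf Qa z = N t := by rw [hz, qf_comb]
  have hDz : qf Qb z = D t := by
    rw [hz, qf_comb, hu, hw]
  have hDt := hDpos t ht
  have hsq : Real.sqrt (e / D t) ^ 2 = e / D t :=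
    Real.sq_sqrt (div_nonneg he.le hDt.le)
  refine ⟨Real.sqrt (e / D t) • z, ?_, ?_⟩
  · rw [qf_smul, hsq, hNz]
    have h3 : e / D t * N t = e * N t / D t := by ring
    rw [h3]; exact hft
  · rw [qf_smul, hsq, hDz, div_mul_cancel₀ _ hDt.ne']

private lemma dines_indep (Qa Qb : V →ₗ[ℝ] V →ₗ[ℝ] ℝ) (u w : V) (p q : ℝ × ℝ)
    (hu : (qf Qa u, qf Qb u) = p) (hw : (qf Qa w, qf Qb w) = q)
    (la lb : ℝ) (hla : 0 ≤ la) (hlb : 0 ≤ lb) (hsum : la + lb = 1)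
    (hDd : 0 < p.1 * q.2 - p.2 * q.1) :
    ∃ x : V, (qf Qa x, qf Qb x) = la • p + lb • q := by
  have hp1 : qf Qa u = p.1 := congrArg Prod.fst hu
  have hp2 : qf Qb u = p.2 := congrArg Prod.snd hu
  have hq1 : qf Qa w = q.1 := congrArg Prod.fst hw
  have hq2 : qf Qb w = q.2 := congrArg Prod.snd hw
  set Qa' : V →ₗ[ℝ] V →ₗ[ℝ] ℝ := (q.2 + p.2) • Qa + (-p.1 - q.1) • Qb with hQa'
  set Qb' : V →ₗ[ℝ] V →ₗ[ℝ] ℝ := (q.2 - p.2) • Qa + (p.1 - q.1) • Qb with hQb'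
  have hau : qf Qa' u = p.1 * q.2 - p.2 * q.1 := by
    rw [hQa', qf_smul_lin, hp1, hp2]; ring
  have haw : qf Qa' w = -(p.1 * q.2 - p.2 * q.1) := by
    rw [hQa', qf_smul_lin, hq1, hq2]; ring
  have hbu : qf Qb' u = p.1 * q.2 - p.2 * q.1 := by
    rw [hQb', qf_smul_lin, hp1, hp2]; ring
  have hbw : qf Qb' w = p.1 * q.2 - p.2 * q.1 := by
    rw [hQb', qf_smul_lin, hq1, hq2]; ring
  -- sign-correct w
  set w' : V := if 0 ≤ Qb' u w + Qb' w u then w else -w with hw'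
  have hbw' : qf Qb' w' = p.1 * q.2 - p.2 * q.1 := by
    rw [hw']; split <;> simp [qf_neg, hbw]
  have haw' : qf Qa' w' = -(p.1 * q.2 - p.2 * q.1) := by
    rw [hw']; split <;> simp [qf_neg, haw]
  have hβ : 0 ≤ Qb' u w' + Qb' w' u := by
    rw [hw']; split
    · assumption
    · rename_i h
      push_neg at h
      simp only [map_neg, LinearMap.neg_apply]
      linarith
  have hc : la * qf Qa' u + lb * qf Qa' w' ∈ Set.uIcc (qf Qa' u) (qf Qa' w') := by
    have := (convex_uIcc (qf Qa' u) (qf Qa' w')) (Set.left_mem_uIcc)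
      (Set.right_mem_uIcc) hla hlb hsum
    simpa [smul_eq_mul] using this
  obtain ⟨x, hxa, hxb⟩ := dines_key Qa' Qb' u w' hDd hbu hbw' hβ hc
  rw [hau, haw'] at hxa
  rw [hQa', qf_smul_lin] at hxa
  rw [hQb', qf_smul_lin] at hxb
  set X := qf Qa x with hX
  set Y := qf Qb x with hY
  have h2Dd : (2 * (p.1 * q.2 - p.2 * q.1)) ≠ 0 := by positivity
  have hXv : 2 * (p.1 * q.2 - p.2 * q.1) * X
      = 2 * (p.1 * q.2 - p.2 * q.1) * (la * p.1 + lb * q.1) := by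
    linear_combination (p.1 - q.1) * hxa + (p.1 + q.1) * hxb
      - (p.1 * q.2 - p.2 * q.1) * (p.1 + q.1) * hsum
  have hYv : 2 * (p.1 * q.2 - p.2 * q.1) * Y
      = 2 * (p.1 * q.2 - p.2 * q.1) * (la * p.2 + lb * q.2) := by
    linear_combination (p.2 - q.2) * hxa + (q.2 + p.2) * hxb
      - (p.1 * q.2 - p.2 * q.1) * (p.2 + q.2) * hsum
  refine ⟨x, ?_⟩
  have e1 : X = la * p.1 + lb * q.1 := mul_left_cancel₀ h2Dd hXv
  have e2 : Y = la * p.2 + lb * q.2 := mul_left_cancel₀ h2Dd hYv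
  have hpr : la • p + lb • q = (la * p.1 + lb * q.1, la * p.2 + lb * q.2) := by
    simp [Prod.ext_iff, smul_eq_mul]
  rw [hpr]
  exact Prod.ext e1 e2

/-- **Dines' theorem**: the joint range of two real quadratic forms is convex. -/
private theorem dines (Qa Qb : V →ₗ[ℝ] V →ₗ[ℝ] ℝ) :
    Convex ℝ {p : ℝ × ℝ | ∃ x : V, (qf Qa x, qf Qb x) = p} := by
  have cone : ∀ (s : ℝ), 0 ≤ s → ∀ p ∈ {p : ℝ × ℝ | ∃ x : V, (qf Qa x, qf Qb x) = p},
      s • p ∈ {p : ℝ × ℝ | ∃ x : V, (qf Qa x, qf Qb x) = p} := by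
    rintro s hs p ⟨x, rfl⟩
    exact ⟨Real.sqrt s • x, by
      simp [qf_smul, Real.sq_sqrt hs, Prod.smul_mk, smul_eq_mul]⟩
  rintro p hp q hq la lb hla hlb hsum
  have dep : ∀ p' q', p' ∈ {p : ℝ × ℝ | ∃ x : V, (qf Qa x, qf Qb x) = p} →
      q' ∈ {p : ℝ × ℝ | ∃ x : V, (qf Qa x, qf Qb x) = p} →
      ∀ a b : ℝ, 0 ≤ a → 0 ≤ b → (∃ t : ℝ, q' = t • p') →
      a • p' + b • q' ∈ {p : ℝ × ℝ | ∃ x : V, (qf Qa x, qf Qb x) = p} := by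
    rintro p' q' hp' hq' a b ha hb ⟨t, rfl⟩
    rcases le_or_gt 0 (a + b * t) with hpos | hneg
    · have h : a • p' + b • (t • p') = (a + b * t) • p' := by
        rw [smul_smul, ← add_smul]
      rw [h]; exact cone _ hpos _ hp'
    · have ht : t < 0 := by nlinarith
      have h : a • p' + b • (t • p') = ((a + b * t) / t) • (t • p') := by
        rw [smul_smul, smul_smul, div_mul_cancel₀ _ ht.ne, ← add_smul]
      rw [h]
      exact cone _ (le_of_lt (div_pos_of_neg_of_neg hneg ht)) _ hq'
  rcases lt_trichotomy (p.1 * q.2 - p.2 * q.1) 0 with hdet | hdet | hdet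
  · obtain ⟨u, hu⟩ := hp
    obtain ⟨w, hw⟩ := hq
    have hDd : 0 < q.1 * p.2 - q.2 * p.1 := by linarith
    obtain ⟨x, hx⟩ := dines_indep Qa Qb w u q p hw hu lb la hlb hla (by linarith) hDd
    exact ⟨x, by rw [hx, add_comm]⟩
  · by_cases hp0 : p = 0
    · subst hp0
      have h := dep q 0 hq ⟨0, by simp [qf]⟩ lb la hlb hla ⟨0, by simp⟩
      simpa [add_comm] using h
    · refine dep p q hp hq la lb hla hlb ?_
      by_cases h1 : p.1 ≠ 0
      · refine ⟨q.1 / p.1, ?_⟩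
        have h2 : q.2 = q.1 / p.1 * p.2 := by
          field_simp; nlinarith [hdet]
        ext
        · show q.1 = q.1 / p.1 * p.1
          rw [div_mul_cancel₀ _ h1]
        · exact h2
      · push_neg at h1
        have h2 : p.2 ≠ 0 := by
          intro h2; exact hp0 (Prod.ext h1 h2)
        refine ⟨q.2 / p.2, ?_⟩
        have h3 : q.1 = q.2 / p.2 * p.1 := by
          field_simp; nlinarith [hdet]
        ext
        · exact h3
        · show q.2 = q.2 / p.2 * p.2
          rw [div_mul_cancel₀ _ h2]
  · obtain ⟨u, hu⟩ := hp
    obtain ⟨w, hw⟩ := hq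
    exact dines_indep Qa Qb u w p q hu hw la lb hla hlb hsum hdet

/-- **Homogeneous S-lemma** (Yakubovich). -/
private theorem slemma_hom (Qa Qb : V →ₗ[ℝ] V →ₗ[ℝ] ℝ)
    (H : ∀ x : V, qf Qb x ≤ 0 → 0 ≤ qf Qa x) (xb : V) (hxb : qf Qb xb < 0) :
    ∃ σ : ℝ, 0 ≤ σ ∧ ∀ x : V, 0 ≤ qf Qa x + σ * qf Qb x := by
  classical
  set W : Set (ℝ × ℝ) := {p : ℝ × ℝ | ∃ x : V, (qf Qa x, qf Qb x) = p} with hW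
  set C : Set (ℝ × ℝ) := {p : ℝ × ℝ | p.1 < 0} ∩ {p : ℝ × ℝ | p.2 < 0} with hC
  have hWconv : Convex ℝ W := dines Qa Qb
  have hfst : IsLinearMap ℝ (fun p : ℝ × ℝ => p.1) := ⟨fun _ _ => rfl, fun _ _ => rfl⟩
  have hsnd : IsLinearMap ℝ (fun p : ℝ × ℝ => p.2) := ⟨fun _ _ => rfl, fun _ _ => rfl⟩
  have hCconv : Convex ℝ C :=
    (convex_halfSpace_lt hfst 0).inter (convex_halfSpace_lt hsnd 0)
  have hCopen : IsOpen C :=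
    (isOpen_lt continuous_fst continuous_const).inter
      (isOpen_lt continuous_snd continuous_const)
  have hdisj : Disjoint C W := by
    rw [Set.disjoint_left]
    rintro r ⟨h1, h2⟩ ⟨x, rfl⟩
    exact absurd (H x (le_of_lt h2)) (not_le.2 h1)
  obtain ⟨φ, u0, hCb, hWb⟩ := geometric_hahn_banach_open hCconv hCopen hWconv hdisj
  set a : ℝ := φ (1, 0) with ha
  set b : ℝ := φ (0, 1) with hb
  have hφ : ∀ r : ℝ × ℝ, φ r = a * r.1 + b * r.2 := by
    intro r
    have h : r = r.1 • ((1:ℝ), (0:ℝ)) + r.2 • ((0:ℝ), (1:ℝ)) := by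
      ext <;> simp
    have h2 : φ r = r.1 * a + r.2 * b := by
      conv_lhs => rw [h]
      rw [map_add, _root_.map_smul, _root_.map_smul, smul_eq_mul, smul_eq_mul, ← ha, ← hb]
    rw [h2]; ring
  have key : ∀ s t : ℝ, 0 < s → 0 < t → -(a * s + b * t) < u0 := by
    intro s t hs ht
    have h := hCb (-s, -t) ⟨show -s < 0 by linarith, show -t < 0 by linarith⟩
    rw [hφ] at h
    have h2 : a * (-s) + b * (-t) < u0 := h
    have h3 : -(a * s + b * t) = a * (-s) + b * (-t) := by ring
    rw [h3]; exact h2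
  have hu0le : u0 ≤ 0 := by
    have := hWb (0, 0) ⟨0, by rw [qf_zero, qf_zero]⟩
    rw [hφ] at this; simpa using this
  have hu0ge : 0 ≤ u0 := by
    by_contra hu
    push_neg at hu
    have hab : ∀ ε : ℝ, 0 < ε → -u0 < (a + b) * ε := by
      intro ε hε
      have := key ε ε hε hε
      nlinarith
    have habpos : 0 < a + b := by
      have := hab 1 one_pos; nlinarith
    have hq : 0 < -u0 / (2 * (a + b)) := div_pos (by linarith) (by linarith)
    have h5 := hab (-u0 / (2 * (a + b))) hq
    have h6 : (a + b) * (-u0 / (2 * (a + b))) = -u0 / 2 := by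
      field_simp
    rw [h6] at h5
    linarith
  have hu0 : u0 = 0 := le_antisymm hu0le hu0ge
  have hA : 0 ≤ a := by
    by_contra hA; push_neg at hA
    have ha' : a ≠ 0 := hA.ne
    have hspos : 0 < (|b| + 1) / (-a) := div_pos (by positivity) (by linarith)
    have := key ((|b| + 1) / (-a)) 1 hspos one_pos
    rw [hu0] at this
    have h1 : a * ((|b| + 1) / (-a)) = -(|b| + 1) := by
      have hr : a * ((|b| + 1) / (-a)) = -((|b| + 1) * (a / a)) := by ring
      rw [hr, div_self ha', mul_one]
    rw [h1] at this
    have := abs_nonneg b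
    have := le_abs_self b
    linarith
  have hBc : 0 ≤ b := by
    by_contra hB; push_neg at hB
    have hb' : b ≠ 0 := hB.ne
    have htpos : 0 < (|a| + 1) / (-b) := div_pos (by positivity) (by linarith)
    have := key 1 ((|a| + 1) / (-b)) one_pos htpos
    rw [hu0] at this
    have h1 : b * ((|a| + 1) / (-b)) = -(|a| + 1) := by
      have hr : b * ((|a| + 1) / (-b)) = -((|a| + 1) * (b / b)) := by ring
      rw [hr, div_self hb', mul_one]
    rw [h1] at this
    have := abs_nonneg a
    have := le_abs_self a
    linarith
  have hWpos : ∀ x : V, 0 ≤ a * qf Qa x + b * qf Qb x := by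
    intro x
    have := hWb _ ⟨x, rfl⟩
    rw [hφ, hu0] at this
    simpa using this
  have hApos : 0 < a := by
    rcases hA.lt_or_eq with h | h
    · exact h
    · exfalso
      have hb0 : b = 0 := by
        have := hWpos xb
        rw [← h] at this
        simp at this
        nlinarith
      have := hCb (-1, -1) ⟨by norm_num, by norm_num⟩
      rw [hφ, ← h, hb0, hu0] at this
      simp at this
  refine ⟨b / a, div_nonneg hBc hApos.le, fun x => ?_⟩
  have := hWpos x
  rw [div_mul_eq_mul_div, ← sub_nonneg]
  have h2 : qf Qa x + b * qf Qb x / a - 0 = (a * qf Qa x + b * qf Qb x) / a := by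
    field_simp; ring
  rw [h2]
  exact div_nonneg this hApos.le

end DinesSec

/-! ### Matrix-level lemmas -/

private lemma dot_symm_s12 {n : ℕ} {M : Matrix (Fin n) (Fin n) ℝ} (hM : M.IsSymm)
    (x y : Fin n → ℝ) : x ⬝ᵥ M *ᵥ y = y ⬝ᵥ M *ᵥ x := by
  rw [dotProduct_comm, dotProduct_mulVec, ← mulVec_transpose, hM.eq, dotProduct_comm]

private lemma nonneg_quad_psd {n : ℕ} {M : Matrix (Fin n) (Fin n) ℝ} (hM : M.IsSymm)
    {c : Fin n → ℝ} {d : ℝ}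
    (h : ∀ x : Fin n → ℝ, 0 ≤ x ⬝ᵥ M *ᵥ x - 2 * (c ⬝ᵥ x) + d) :
    M.PosSemidef ∧ ∃ w : Fin n → ℝ, M *ᵥ w = c := by
  have herm : M.IsHermitian := by
    rw [Matrix.IsHermitian, conjTranspose_eq_transpose_of_trivial]; exact hM
  have hexp : ∀ (s : ℝ) (v : Fin n → ℝ),
      (s • v) ⬝ᵥ M *ᵥ (s • v) - 2 * (c ⬝ᵥ (s • v)) + d
        = (v ⬝ᵥ M *ᵥ v) * s ^ 2 + (-2 * (c ⬝ᵥ v)) * s + d := by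
    intro s v
    rw [mulVec_smul, dotProduct_smul, smul_dotProduct, dotProduct_smul]
    simp [smul_eq_mul]; ring
  have hpsd : M.PosSemidef := by
    refine .of_dotProduct_mulVec_nonneg herm (fun v => ?_)
    have hq : 0 ≤ v ⬝ᵥ M *ᵥ v := by
      apply quad_coeff_nonneg' (b := -2 * (c ⬝ᵥ v)) (c := d)
      intro s _
      rw [← hexp s v]; exact h _
    simpa using hq
  refine ⟨hpsd, ?_⟩
  by_contra hc
  push_neg at hc
  have hcr : c ∉ LinearMap.range M.mulVecLin := by
    rintro ⟨w, hw⟩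
    exact hc w hw
  obtain ⟨ψ, hψc, hψr⟩ :=
    Submodule.exists_dual_map_eq_bot_of_notMem hcr inferInstance
  set y : Fin n → ℝ := fun i => ψ (fun j => if i = j then 1 else 0) with hy
  have hψeq : ∀ x : Fin n → ℝ, ψ x = x ⬝ᵥ y := by
    intro x
    rw [LinearMap.pi_apply_eq_sum_univ]
    simp [hy, dotProduct, smul_eq_mul]
  have hker : ∀ x : Fin n → ℝ, (M *ᵥ x) ⬝ᵥ y = 0 := by
    intro x
    have h1 : ψ (M *ᵥ x) = 0 := by
      have hmem : M *ᵥ x ∈ LinearMap.range M.mulVecLin := ⟨x, rfl⟩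
      have h2 := Submodule.mem_map_of_mem (f := ψ) hmem
      rw [hψr] at h2
      simpa using h2
    rw [hψeq] at h1; exact h1
  have hMty : Mᵀ *ᵥ y = 0 := by
    have h0 : (Mᵀ *ᵥ y) ⬝ᵥ (Mᵀ *ᵥ y) = 0 := by
      have := hker (Mᵀ *ᵥ y)
      rwa [dotProduct_comm, dotProduct_mulVec, ← mulVec_transpose] at this
    exact dotProduct_self_eq_zero.mp h0
  have hMy : M *ᵥ y = 0 := by rw [← hM.eq]; exact hMty
  have hcy : c ⬝ᵥ y = 0 := by
    have hl : ∀ s : ℝ, 0 ≤ -2 * (c ⬝ᵥ y) * s + d := by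
      intro s
      have := h (s • y)
      rw [hexp s y, hMy] at this
      simpa using this
    have := lin_coeff_zero' hl
    linarith
  exact hψc (by rw [hψeq]; exact hcy)

/-! ### Homogenization -/

private def homQ {n : ℕ} (M : Matrix (Fin n) (Fin n) ℝ) (v : Fin n → ℝ) (d : ℝ) :
    ((Fin n → ℝ) × ℝ) →ₗ[ℝ] ((Fin n → ℝ) × ℝ) →ₗ[ℝ] ℝ :=
  LinearMap.mk₂ ℝ
    (fun p q => p.1 ⬝ᵥ M *ᵥ q.1 - (v ⬝ᵥ p.1) * q.2 - (v ⬝ᵥ q.1) * p.2 + d * p.2 * q.2)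
    (by
      intro p q r
      simp [add_dotProduct, dotProduct_add, Prod.fst_add, Prod.snd_add]
      ring)
    (by
      intro c p q
      simp [smul_dotProduct, dotProduct_smul, Prod.smul_fst, Prod.smul_snd, smul_eq_mul]
      ring)
    (by
      intro p q r
      simp [add_dotProduct, dotProduct_add, mulVec_add, Prod.fst_add, Prod.snd_add]
      ring)
    (by
      intro c p q
      simp [smul_dotProduct, dotProduct_smul, mulVec_smul, Prod.smul_fst, Prod.smul_snd,
        smul_eq_mul]
      ring)

private lemma homQ_qf {n : ℕ} (M : Matrix (Fin n) (Fin n) ℝ) (v : Fin n → ℝ) (d : ℝ)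
    (x : Fin n → ℝ) (s : ℝ) :
    qf (homQ M v d) (x, s) = x ⬝ᵥ M *ᵥ x - 2 * (v ⬝ᵥ x) * s + d * s ^ 2 := by
  show (homQ M v d) (x, s) (x, s) = _
  simp [homQ, LinearMap.mk₂_apply]
  ring

private lemma homQ_cross {n : ℕ} (M : Matrix (Fin n) (Fin n) ℝ) (v : Fin n → ℝ) (d : ℝ)
    (x₀ x : Fin n → ℝ) :
    (homQ M v d) (x₀, 1) (x, 0) + (homQ M v d) (x, 0) (x₀, 1)
      = x₀ ⬝ᵥ M *ᵥ x + x ⬝ᵥ M *ᵥ x₀ - 2 * (v ⬝ᵥ x) := by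
  simp [homQ, LinearMap.mk₂_apply]
  ring

/-- Hard direction: if the objective is bounded below on the feasible region,
a dual multiplier exists. -/
private lemma bounded_to_sigma {n : ℕ} (A B : Matrix (Fin n) (Fin n) ℝ)
    (hA : A.IsSymm) (hB : B.IsSymm) (f g : Fin n → ℝ) (μ t : ℝ)
    (slater : ∃ x₀ : Fin n → ℝ, x₀ ⬝ᵥ B *ᵥ x₀ - 2 * (g ⬝ᵥ x₀) < μ)
    (hbdd : ∀ x : Fin n → ℝ, x ⬝ᵥ B *ᵥ x - 2 * (g ⬝ᵥ x) ≤ μ →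
      t ≤ x ⬝ᵥ A *ᵥ x - 2 * (f ⬝ᵥ x)) :
    ∃ σ : ℝ, 0 ≤ σ ∧ (A + σ • B).PosSemidef ∧
      ∃ w : Fin n → ℝ, (A + σ • B) *ᵥ w = f + σ • g := by
  classical
  obtain ⟨x₀, hx₀⟩ := slater
  set Qa := homQ A f (-t) with hQa
  set Qb := homQ B g (-μ) with hQb
  -- expansion of quadratic along rays through the Slater point
  have hray : ∀ (M : Matrix (Fin n) (Fin n) ℝ) (v z : Fin n → ℝ) (ρ : ℝ),
      (x₀ + ρ • z) ⬝ᵥ M *ᵥ (x₀ + ρ • z) - 2 * (v ⬝ᵥ (x₀ + ρ • z))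
        = (z ⬝ᵥ M *ᵥ z) * ρ ^ 2 + (x₀ ⬝ᵥ M *ᵥ z + z ⬝ᵥ M *ᵥ x₀ - 2 * (v ⬝ᵥ z)) * ρ
          + (x₀ ⬝ᵥ M *ᵥ x₀ - 2 * (v ⬝ᵥ x₀)) := by
    intro M v z ρ
    simp only [mulVec_add, mulVec_smul, dotProduct_add, add_dotProduct, dotProduct_smul,
      smul_dotProduct, smul_eq_mul]
    ring
  have H : ∀ p : (Fin n → ℝ) × ℝ, qf Qb p ≤ 0 → 0 ≤ qf Qa p := by
    rintro ⟨x, s⟩ hqb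
    rw [hQb, homQ_qf] at hqb
    rw [hQa, homQ_qf]
    by_cases hs : s = 0
    · subst hs
      simp only [mul_zero, zero_pow, ne_eq, OfNat.ofNat_ne_zero, not_false_eq_true,
        sub_zero, add_zero] at hqb ⊢
      have hqb' : x ⬝ᵥ B *ᵥ x ≤ 0 := by nlinarith [hqb]
      -- ray argument
      set L : ℝ := x₀ ⬝ᵥ B *ᵥ x + x ⬝ᵥ B *ᵥ x₀ - 2 * (g ⬝ᵥ x) with hL
      set ε : ℝ := if L ≤ 0 then 1 else -1 with hε
      have hεL : ε * L ≤ 0 := by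
        rw [hε]; split
        · simpa
        · rename_i hh; push_neg at hh; nlinarith
      have hε2 : ε ^ 2 = 1 := by
        rw [hε]; split <;> norm_num
      have hfeas : ∀ ρ : ℝ, 0 ≤ ρ →
          (x₀ + ρ • (ε • x)) ⬝ᵥ B *ᵥ (x₀ + ρ • (ε • x))
            - 2 * (g ⬝ᵥ (x₀ + ρ • (ε • x))) ≤ μ := by
        intro ρ hρ
        rw [hray]
        have hq : (ε • x) ⬝ᵥ B *ᵥ (ε • x) = x ⬝ᵥ B *ᵥ x := by
          simp only [mulVec_smul, dotProduct_smul, smul_dotProduct, smul_eq_mul]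
          linear_combination (x ⬝ᵥ B *ᵥ x) * hε2
        have hcr : x₀ ⬝ᵥ B *ᵥ (ε • x) + (ε • x) ⬝ᵥ B *ᵥ x₀ - 2 * (g ⬝ᵥ (ε • x)) = ε * L := by
          simp only [mulVec_smul, dotProduct_smul, smul_dotProduct, smul_eq_mul, hL]
          ring
        rw [hq, hcr]
        have h1 : (x ⬝ᵥ B *ᵥ x) * ρ ^ 2 ≤ 0 :=
          mul_nonpos_of_nonpos_of_nonneg hqb' (by positivity)
        have h2 : ε * L * ρ ≤ 0 := mul_nonpos_of_nonpos_of_nonneg hεL hρ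
        linarith
      have hFnn : 0 ≤ x ⬝ᵥ A *ᵥ x := by
        apply quad_coeff_nonneg'
          (b := x₀ ⬝ᵥ A *ᵥ (ε • x) + (ε • x) ⬝ᵥ A *ᵥ x₀ - 2 * (f ⬝ᵥ (ε • x)))
          (c := x₀ ⬝ᵥ A *ᵥ x₀ - 2 * (f ⬝ᵥ x₀) - t)
        intro ρ hρ
        have h3 := hbdd _ (hfeas ρ hρ)
        rw [hray] at h3
        have hq : (ε • x) ⬝ᵥ A *ᵥ (ε • x) = x ⬝ᵥ A *ᵥ x := by
          simp only [mulVec_smul, dotProduct_smul, smul_dotProduct, smul_eq_mul]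
          linear_combination (x ⬝ᵥ A *ᵥ x) * hε2
        rw [hq] at h3
        linarith
      linarith
    · have hs2 : 0 < s ^ 2 := by positivity
      set y : Fin n → ℝ := s⁻¹ • x with hy
      have hxy : x = s • y := by
        rw [hy, smul_smul, mul_inv_cancel₀ hs, one_smul]
      have hqbq : x ⬝ᵥ B *ᵥ x - 2 * (g ⬝ᵥ x) * s + -μ * s ^ 2
          = (y ⬝ᵥ B *ᵥ y - 2 * (g ⬝ᵥ y) - μ) * s ^ 2 := by
        conv_lhs => rw [hxy]
        simp only [mulVec_smul, dotProduct_smul, smul_dotProduct, smul_eq_mul]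
        ring
      rw [hqbq] at hqb
      have hfeasy : y ⬝ᵥ B *ᵥ y - 2 * (g ⬝ᵥ y) ≤ μ := by nlinarith
      have hFy := hbdd y hfeasy
      have hqaq : x ⬝ᵥ A *ᵥ x - 2 * (f ⬝ᵥ x) * s + -t * s ^ 2
          = (y ⬝ᵥ A *ᵥ y - 2 * (f ⬝ᵥ y) - t) * s ^ 2 := by
        conv_lhs => rw [hxy]
        simp only [mulVec_smul, dotProduct_smul, smul_dotProduct, smul_eq_mul]
        ring
      rw [hqaq]
      nlinarith
  have hxb : qf Qb (x₀, 1) < 0 := by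
    rw [hQb, homQ_qf]
    nlinarith
  obtain ⟨σ, hσ, hall⟩ := slemma_hom Qa Qb H (x₀, 1) hxb
  have hq : ∀ x : Fin n → ℝ,
      0 ≤ x ⬝ᵥ (A + σ • B) *ᵥ x - 2 * ((f + σ • g) ⬝ᵥ x) + (-t - σ * μ) := by
    intro x
    have h1 := hall (x, 1)
    rw [hQa, hQb, homQ_qf, homQ_qf] at h1
    have h2 : x ⬝ᵥ (A + σ • B) *ᵥ x - 2 * ((f + σ • g) ⬝ᵥ x) + (-t - σ * μ)
        = (x ⬝ᵥ A *ᵥ x - 2 * (f ⬝ᵥ x) * 1 + -t * 1 ^ 2)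
          + σ * (x ⬝ᵥ B *ᵥ x - 2 * (g ⬝ᵥ x) * 1 + -μ * 1 ^ 2) := by
      simp only [add_mulVec, dotProduct_add, add_dotProduct, smul_mulVec,
        dotProduct_smul, smul_dotProduct, smul_eq_mul]
      ring
    rw [h2]
    exact h1
  have hsym : (A + σ • B).IsSymm := by
    rw [Matrix.IsSymm, transpose_add, transpose_smul, hA.eq, hB.eq]
  obtain ⟨hpsd, w, hw⟩ := nonneg_quad_psd hsym hq
  exact ⟨σ, hσ, hpsd, w, hw⟩

/-- under the primal Slater condition, (QP1QC) is unbounded below iff the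
system `σ ≥ 0`, `A + σB ≽ 0`, `f + σg ∈ R(A + σB)` has no solution. -/
theorem stmt_12 {n : ℕ} (A B : Matrix (Fin n) (Fin n) ℝ)
    (hA : A.IsSymm) (hB : B.IsSymm) (f g : Fin n → ℝ) (μ : ℝ)
    (slater : ∃ x₀ : Fin n → ℝ, x₀ ⬝ᵥ B *ᵥ x₀ - 2 * (g ⬝ᵥ x₀) < μ) :
    (∀ t : ℝ, ∃ x : Fin n → ℝ,
        x ⬝ᵥ B *ᵥ x - 2 * (g ⬝ᵥ x) ≤ μ ∧ x ⬝ᵥ A *ᵥ x - 2 * (f ⬝ᵥ x) < t) ↔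
      ¬ ∃ σ : ℝ, 0 ≤ σ ∧ (A + σ • B).PosSemidef ∧
          ∃ w : Fin n → ℝ, (A + σ • B) *ᵥ w = f + σ • g := by
  constructor
  · rintro hunb ⟨σ, hσ, hpsd, w, hw⟩
    set M := A + σ • B with hM
    have hsym : M.IsSymm := by
      rw [Matrix.IsSymm, hM, transpose_add, transpose_smul, hA.eq, hB.eq]
    obtain ⟨x, hfeas, hobj⟩ := hunb (-(w ⬝ᵥ M *ᵥ w) - σ * μ)
    -- lower bound on the objective at any feasible point
    have hpos := hpsd.dotProduct_mulVec_nonneg (x - w)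
    have hstar : star (x - w) = x - w := by simp
    rw [hstar] at hpos
    have hexp : (x - w) ⬝ᵥ M *ᵥ (x - w)
        = x ⬝ᵥ M *ᵥ x - x ⬝ᵥ M *ᵥ w - w ⬝ᵥ M *ᵥ x + w ⬝ᵥ M *ᵥ w := by
      simp only [sub_eq_add_neg, mulVec_add, mulVec_neg, dotProduct_add, dotProduct_neg,
        add_dotProduct, neg_dotProduct]
      ring
    have hsw : w ⬝ᵥ M *ᵥ x = x ⬝ᵥ M *ᵥ w := dot_symm_s12 hsym w x
    have hMw : x ⬝ᵥ M *ᵥ w = (f + σ • g) ⬝ᵥ x := by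
      rw [hw, dotProduct_comm]
    have hMx : x ⬝ᵥ M *ᵥ x = x ⬝ᵥ A *ᵥ x + σ * (x ⬝ᵥ B *ᵥ x) := by
      simp only [hM, add_mulVec, dotProduct_add, smul_mulVec, dotProduct_smul,
        smul_eq_mul]
    have hfg : (f + σ • g) ⬝ᵥ x = f ⬝ᵥ x + σ * (g ⬝ᵥ x) := by
      simp only [add_dotProduct, smul_dotProduct, smul_eq_mul]
    have hσG : σ * (x ⬝ᵥ B *ᵥ x - 2 * (g ⬝ᵥ x) - μ) ≤ 0 :=
      mul_nonpos_of_nonneg_of_nonpos hσ (by linarith)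
    nlinarith [hpos, hexp, hsw, hMw, hMx, hfg, hσG]
  · intro hno t
    by_contra hnx
    push_neg at hnx
    have hbdd : ∀ x : Fin n → ℝ, x ⬝ᵥ B *ᵥ x - 2 * (g ⬝ᵥ x) ≤ μ →
        t ≤ x ⬝ᵥ A *ᵥ x - 2 * (f ⬝ᵥ x) := fun x hx => hnx x hx
    exact hno (bounded_to_sigma A B hA hB f g μ t slater hbdd)
end

section
/- Consider (QP1QC) with data A, B, f, g, μ. Assume the primal Slater condition holds, assume F is bounded below on the feasible set {x : G(x) ≤ μ}, and assume there exist σ₁ ≠ σ₂ in ℝ such that A + σ₁B and A + σ₂B are both positive semidefinite. Then the infimum of F over the feasible set is attained, i.e., there exists x* with G(x*) ≤ μ and F(x*) = inf{F(x) : G(x) ≤ μ}. -/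
open Matrix Filter Topology

section QP1QCAux

variable {n : ℕ}

/-- The quadratic function `x ↦ xᵀMx - 2cᵀx`. -/
noncomputable def qfun (M : Matrix (Fin n) (Fin n) ℝ) (c : Fin n → ℝ) (x : Fin n → ℝ) : ℝ :=
  x ⬝ᵥ M *ᵥ x - 2 * (c ⬝ᵥ x)

lemma dot_mulVec_symm {M : Matrix (Fin n) (Fin n) ℝ} (hM : M.IsSymm) (v x : Fin n → ℝ) :
    v ⬝ᵥ M *ᵥ x = (M *ᵥ v) ⬝ᵥ x := by
  rw [Matrix.dotProduct_mulVec, ← Matrix.mulVec_transpose, hM]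

lemma qfun_expand {M : Matrix (Fin n) (Fin n) ℝ} (hM : M.IsSymm) (c x v : Fin n → ℝ) (t : ℝ) :
    qfun M c (x + t • v) =
      qfun M c x + 2 * t * ((M *ᵥ v) ⬝ᵥ x - c ⬝ᵥ v) + t ^ 2 * (v ⬝ᵥ M *ᵥ v) := by
  have h1 : x ⬝ᵥ M *ᵥ v = (M *ᵥ v) ⬝ᵥ x := dotProduct_comm _ _
  have h2 : v ⬝ᵥ M *ᵥ x = (M *ᵥ v) ⬝ᵥ x := dot_mulVec_symm hM v x
  simp only [qfun, Matrix.mulVec_add, Matrix.mulVec_smul, dotProduct_add, add_dotProduct,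
    dotProduct_smul, smul_dotProduct, smul_eq_mul, h1, h2]
  ring

lemma dot_expand (x v : Fin n → ℝ) (t : ℝ) :
    (x + t • v) ⬝ᵥ (x + t • v) = x ⬝ᵥ x + 2 * t * (x ⬝ᵥ v) + t ^ 2 * (v ⬝ᵥ v) := by
  have h1 : v ⬝ᵥ x = x ⬝ᵥ v := dotProduct_comm _ _
  simp only [dotProduct_add, add_dotProduct, dotProduct_smul, smul_dotProduct, smul_eq_mul, h1]
  ring

lemma qfun_continuous (M : Matrix (Fin n) (Fin n) ℝ) (c : Fin n → ℝ) :
    Continuous (qfun M c) := by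
  have : qfun M c = fun x => (∑ i, x i * ∑ j, M i j * x j) - 2 * (∑ i, c i * x i) := by
    funext x; simp [qfun, dotProduct, Matrix.mulVec]
  rw [this]; fun_prop

lemma form_continuous (M : Matrix (Fin n) (Fin n) ℝ) :
    Continuous (fun x : Fin n → ℝ => x ⬝ᵥ M *ᵥ x) := by
  have h : (fun x : Fin n → ℝ => x ⬝ᵥ M *ᵥ x) = fun x => qfun M 0 x := by
    funext x; simp [qfun]
  rw [h]; exact qfun_continuous M 0

lemma vdot_continuous (v : Fin n → ℝ) :
    Continuous (fun x : Fin n → ℝ => x ⬝ᵥ v) := by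
  have : (fun x : Fin n → ℝ => x ⬝ᵥ v) = fun x => ∑ i, x i * v i := by
    funext x; simp [dotProduct]
  rw [this]; fun_prop

lemma cont_dot_self : Continuous (fun x : Fin n → ℝ => x ⬝ᵥ x) := by
  have : (fun x : Fin n → ℝ => x ⬝ᵥ x) = fun x => ∑ i, x i * x i := by
    funext x; simp [dotProduct]
  rw [this]; fun_prop

lemma dot_self_nonneg' (x : Fin n → ℝ) : 0 ≤ x ⬝ᵥ x :=
  Finset.sum_nonneg fun i _ => mul_self_nonneg _

lemma norm_le_sqrt_dot' (x : Fin n → ℝ) : ‖x‖ ≤ Real.sqrt (x ⬝ᵥ x) := by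
  rw [pi_norm_le_iff_of_nonneg (Real.sqrt_nonneg _)]
  intro i
  rw [Real.norm_eq_abs, ← Real.sqrt_sq_eq_abs]
  apply Real.sqrt_le_sqrt
  have h : x i * x i ≤ x ⬝ᵥ x := by
    unfold dotProduct
    exact Finset.single_le_sum (f := fun j => x j * x j)
      (fun j _ => mul_self_nonneg _) (Finset.mem_univ i)
  nlinarith

lemma psd_of_form {M : Matrix (Fin n) (Fin n) ℝ} (hM : M.IsSymm)
    (h : ∀ x, 0 ≤ x ⬝ᵥ M *ᵥ x) : M.PosSemidef := by
  rw [posSemidef_iff_dotProduct_mulVec]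
  constructor
  · rw [Matrix.IsHermitian, conjTranspose_eq_transpose_of_trivial, hM]
  · intro x
    simpa using h x

lemma psd_mulVec_zero {M : Matrix (Fin n) (Fin n) ℝ} (hM : M.PosSemidef) {x : Fin n → ℝ}
    (h : x ⬝ᵥ M *ᵥ x = 0) : M *ᵥ x = 0 := by
  have := (hM.dotProduct_mulVec_zero_iff x).mp
  simp only [star_trivial] at this
  exact this h

lemma lin_atBot {c₁ : ℝ} (h : c₁ < 0) (c₀ : ℝ) :
    Tendsto (fun t : ℝ => c₀ + c₁ * t) atTop atBot := by
  apply tendsto_atBot_add_const_left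
  exact Tendsto.const_mul_atTop_of_neg h tendsto_id

lemma quad_atBot {c₂ : ℝ} (h : c₂ < 0) (c₀ c₁ : ℝ) :
    Tendsto (fun t : ℝ => c₀ + c₁ * t + c₂ * t ^ 2) atTop atBot := by
  have h1 : Tendsto (fun t : ℝ => c₁ + c₂ * t) atTop atBot := lin_atBot h c₁
  have h2 : Tendsto (fun t : ℝ => t * (c₁ + c₂ * t)) atTop atBot :=
    Tendsto.atTop_mul_atBot₀ tendsto_id h1
  have h3 := tendsto_atBot_add_const_left atTop c₀ h2
  exact h3.congr (by intro t; ring)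

lemma exists_min_dot {C : Set (Fin n → ℝ)} (hC : IsClosed C) (hne : C.Nonempty) :
    ∃ x ∈ C, ∀ y ∈ C, x ⬝ᵥ x ≤ y ⬝ᵥ y := by
  obtain ⟨y₀, hy₀⟩ := hne
  set R := Real.sqrt (y₀ ⬝ᵥ y₀) with hR
  have hK : IsCompact (C ∩ Metric.closedBall 0 R) :=
    (isCompact_closedBall 0 R).inter_left hC
  have hy₀K : y₀ ∈ C ∩ Metric.closedBall 0 R := by
    refine ⟨hy₀, ?_⟩
    simpa [Metric.mem_closedBall] using norm_le_sqrt_dot' y₀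
  obtain ⟨x, hxK, hmin⟩ := hK.exists_isMinOn ⟨y₀, hy₀K⟩ cont_dot_self.continuousOn
  refine ⟨x, hxK.1, fun y hy => ?_⟩
  by_cases hyb : y ∈ Metric.closedBall 0 R
  · exact hmin ⟨hy, hyb⟩
  · have h1 : x ⬝ᵥ x ≤ y₀ ⬝ᵥ y₀ := hmin hy₀K
    have h2 : R < ‖y‖ := by
      simpa [Metric.mem_closedBall] using hyb
    have h3 : R < Real.sqrt (y ⬝ᵥ y) := lt_of_lt_of_le h2 (norm_le_sqrt_dot' y)
    have h4 : y₀ ⬝ᵥ y₀ < y ⬝ᵥ y := by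
      nlinarith [Real.sq_sqrt (dot_self_nonneg' y₀), Real.sq_sqrt (dot_self_nonneg' y),
        Real.sqrt_nonneg (y₀ ⬝ᵥ y₀)]
    linarith

lemma recession_form_nonpos {M : Matrix (Fin n) (Fin n) ℝ} {c : Fin n → ℝ} {β : ℝ}
    {ρ : ℕ → ℝ} {u : ℕ → Fin n → ℝ} {v : Fin n → ℝ}
    (hρpos : ∀ j, 0 < ρ j)
    (hρtop : Tendsto ρ atTop atTop)
    (hconv : Tendsto u atTop (𝓝 v))
    (hbound : ∀ j, qfun M c (ρ j • u j) ≤ β) :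
    v ⬝ᵥ M *ᵥ v ≤ 0 := by
  have hform : ∀ j, u j ⬝ᵥ M *ᵥ u j ≤ β / (ρ j)^2 + 2 * (c ⬝ᵥ u j) / ρ j := by
    intro j
    have hp := hρpos j
    have h1 : qfun M c (ρ j • u j) =
        (ρ j)^2 * (u j ⬝ᵥ M *ᵥ u j) - 2 * (ρ j * (c ⬝ᵥ u j)) := by
      simp only [qfun, smul_dotProduct, dotProduct_smul, Matrix.mulVec_smul, smul_eq_mul]
      ring
    have h2 := hbound j
    rw [h1] at h2
    rw [div_add_div _ _ (by positivity) (by positivity), le_div_iff₀ (by positivity)]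
    nlinarith [sq_nonneg (ρ j)]
  have hL : Tendsto (fun j => u j ⬝ᵥ M *ᵥ u j) atTop (𝓝 (v ⬝ᵥ M *ᵥ v)) :=
    ((form_continuous M).tendsto v).comp hconv
  have hinv : Tendsto (fun j => (ρ j)⁻¹) atTop (𝓝 0) := hρtop.inv_tendsto_atTop
  have h1 : Tendsto (fun j => β / (ρ j)^2) atTop (𝓝 0) := by
    have := (hinv.const_mul β).mul hinv
    simp only [mul_zero] at this
    exact this.congr (fun j => by rw [div_eq_mul_inv, sq, mul_inv]; ring)
  have h2 : Tendsto (fun j => 2 * (c ⬝ᵥ u j) / ρ j) atTop (𝓝 0) := by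
    have hc : Tendsto (fun j => 2 * (c ⬝ᵥ u j)) atTop (𝓝 (2 * (c ⬝ᵥ v))) := by
      have hdc : Tendsto (fun j => c ⬝ᵥ u j) atTop (𝓝 (c ⬝ᵥ v)) := by
        have hcont : Continuous (fun x : Fin n → ℝ => c ⬝ᵥ x) := by
          have hcc : (fun x : Fin n → ℝ => c ⬝ᵥ x) = fun x => x ⬝ᵥ c := by
            funext x; rw [dotProduct_comm]
          rw [hcc]; exact vdot_continuous c
        exact (hcont.tendsto v).comp hconv
      exact hdc.const_mul 2
    have := hc.mul hinv
    simp only [mul_zero] at this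
    exact this.congr (fun j => by rw [div_eq_mul_inv])
  have hR : Tendsto (fun j => β / (ρ j)^2 + 2 * (c ⬝ᵥ u j) / ρ j) atTop (𝓝 0) := by
    have := h1.add h2
    rwa [add_zero] at this
  exact le_of_tendsto_of_tendsto' hL hR hform

lemma dichotomy (A B : Matrix (Fin n) (Fin n) ℝ)
    (f g : Fin n → ℝ) (μ m : ℝ)
    (happrox : ∀ ε : ℝ, 0 < ε → ∃ x, qfun B g x ≤ μ ∧ qfun A f x ≤ m + ε) :
    (∃ x, qfun B g x ≤ μ ∧ qfun A f x ≤ m) ∨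
    ∃ v : Fin n → ℝ, v ⬝ᵥ v = 1 ∧ v ⬝ᵥ A *ᵥ v ≤ 0 ∧ v ⬝ᵥ B *ᵥ v ≤ 0 ∧
      ∃ ε : ℝ, 0 < ε ∧ ∃ x', (qfun B g x' ≤ μ ∧ qfun A f x' ≤ m + ε) ∧
        (∀ y, qfun B g y ≤ μ ∧ qfun A f y ≤ m + ε → x' ⬝ᵥ x' ≤ y ⬝ᵥ y) ∧ 0 < x' ⬝ᵥ v := by
  classical
  set C : ℕ → Set (Fin n → ℝ) :=
    fun k => {x | qfun B g x ≤ μ ∧ qfun A f x ≤ m + 1/(k+1)} with hC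
  have hCclosed : ∀ k, IsClosed (C k) := fun k =>
    (isClosed_le (qfun_continuous B g) continuous_const).inter
      (isClosed_le (qfun_continuous A f) continuous_const)
  have hCne : ∀ k, (C k).Nonempty := by
    intro k
    obtain ⟨x, hx1, hx2⟩ := happrox (1/(k+1)) (by positivity)
    exact ⟨x, hx1, hx2⟩
  choose x hxC hxmin using fun k => exists_min_dot (hCclosed k) (hCne k)
  set N : ℕ → ℝ := fun k => x k ⬝ᵥ x k with hN
  have hCmono : ∀ k, C (k+1) ⊆ C k := by
    intro k y hy
    refine ⟨hy.1, le_trans hy.2 ?_⟩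
    have h1 : (1:ℝ)/(k+1+1) ≤ 1/(k+1) := by
      apply one_div_le_one_div_of_le <;> push_cast <;> linarith
    push_cast
    push_cast at h1
    linarith
  have hNmono : Monotone N :=
    monotone_nat_of_le_succ (fun k => hxmin k _ (hCmono k (hxC (k+1))))
  by_cases hBdd : BddAbove (Set.range N)
  · left
    obtain ⟨R, hR⟩ := hBdd
    have hball : ∀ k, x k ∈ Metric.closedBall (0 : Fin n → ℝ) (Real.sqrt R) := by
      intro k
      have h1 : N k ≤ R := hR ⟨k, rfl⟩
      have h2 : Real.sqrt (N k) ≤ Real.sqrt R := Real.sqrt_le_sqrt h1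
      have h3 := norm_le_sqrt_dot' (x k)
      rw [Metric.mem_closedBall, dist_zero_right]
      exact le_trans h3 h2
    obtain ⟨a, _, φ, hφ, hconv⟩ :=
      (isCompact_closedBall (0 : Fin n → ℝ) (Real.sqrt R)).tendsto_subseq hball
    have hGa : qfun B g a ≤ μ :=
      le_of_tendsto (((qfun_continuous B g).tendsto a).comp hconv)
        (Eventually.of_forall fun j => (hxC (φ j)).1)
    have hFa : qfun A f a ≤ m := by
      have hup : Tendsto (fun j => m + 1/((φ j : ℝ)+1)) atTop (𝓝 (m + 0)) := by
        apply Tendsto.const_add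
        have h0 : Tendsto (fun k : ℕ => 1/((k : ℝ)+1)) atTop (𝓝 0) :=
          tendsto_one_div_add_atTop_nhds_zero_nat
        exact h0.comp hφ.tendsto_atTop
      rw [add_zero] at hup
      exact le_of_tendsto_of_tendsto' (((qfun_continuous A f).tendsto a).comp hconv) hup
        (fun j => (hxC (φ j)).2)
    exact ⟨a, hGa, hFa⟩
  · right
    have hNtop : Tendsto N atTop atTop := tendsto_atTop_atTop_of_monotone' hNmono hBdd
    obtain ⟨K₀, hK₀⟩ := eventually_atTop.mp (hNtop.eventually_ge_atTop 1)
    set ρ : ℕ → ℝ := fun j => Real.sqrt (N (j + K₀)) with hρ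
    have hρ1 : ∀ j, 1 ≤ ρ j := by
      intro j
      have h1 : (1:ℝ) ≤ N (j + K₀) := hK₀ (j + K₀) (Nat.le_add_left _ _)
      have := Real.sqrt_le_sqrt h1
      rwa [Real.sqrt_one] at this
    have hρpos : ∀ j, 0 < ρ j := fun j => lt_of_lt_of_le one_pos (hρ1 j)
    set u : ℕ → (Fin n → ℝ) := fun j => (ρ j)⁻¹ • x (j + K₀) with hu
    have hzu : ∀ j, x (j + K₀) = ρ j • u j := by
      intro j
      rw [hu]
      rw [smul_smul, mul_inv_cancel₀ (hρpos j).ne', one_smul]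
    have hu1 : ∀ j, u j ⬝ᵥ u j = 1 := by
      intro j
      have hzz : x (j + K₀) ⬝ᵥ x (j + K₀) = (ρ j)^2 := by
        rw [hρ, Real.sq_sqrt (dot_self_nonneg' _)]
      rw [hu]
      simp only [smul_dotProduct, dotProduct_smul, smul_eq_mul]
      rw [hzz, sq]
      field_simp
      exact div_self (hρpos j).ne'
    set S := {w : Fin n → ℝ | w ⬝ᵥ w = 1} with hS
    have hSsub : S ⊆ Metric.closedBall 0 1 := by
      intro w hw
      rw [Metric.mem_closedBall, dist_zero_right]
      have := norm_le_sqrt_dot' w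
      rw [hw, Real.sqrt_one] at this
      exact this
    have hScomp : IsCompact S := by
      have hclosed : IsClosed S := isClosed_eq cont_dot_self continuous_const
      have hSeq : S = S ∩ Metric.closedBall 0 1 := (Set.inter_eq_left.mpr hSsub).symm
      rw [hSeq]
      exact (isCompact_closedBall 0 1).inter_left hclosed
    obtain ⟨v, hvS, φ, hφ, hconv⟩ := hScomp.tendsto_subseq (fun j => hu1 j)
    have hρφtop : Tendsto (fun j => ρ (φ j)) atTop atTop := by
      rw [tendsto_atTop]
      intro b
      have hev : ∀ᶠ k in atTop, (b^2 ⊔ 1) ≤ N k := hNtop.eventually_ge_atTop _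
      obtain ⟨K₁, hK₁⟩ := eventually_atTop.mp hev
      rw [eventually_atTop]
      refine ⟨K₁, fun j hj => ?_⟩
      have h1 : (b^2 ⊔ 1) ≤ N (φ j + K₀) :=
        hK₁ _ (le_trans hj (le_trans hφ.le_apply (Nat.le_add_right _ _)))
      have h2 : Real.sqrt (b^2 ⊔ 1) ≤ ρ (φ j) := Real.sqrt_le_sqrt h1
      refine le_trans ?_ h2
      rcases le_or_gt b 0 with hb | hb
      · exact le_trans hb (Real.sqrt_nonneg _)
      · have h4 : b ≤ Real.sqrt (b^2) := le_of_eq (Real.sqrt_sq hb.le).symm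
        exact le_trans h4 (Real.sqrt_le_sqrt (le_max_left _ _))
    have hbA : v ⬝ᵥ A *ᵥ v ≤ 0 := by
      refine recession_form_nonpos (M := A) (c := f) (β := m + 1)
        (fun j => hρpos (φ j)) hρφtop hconv (fun j => ?_)
      show qfun A f (ρ (φ j) • u (φ j)) ≤ m + 1
      have hh := (hxC (φ j + K₀)).2
      rw [hzu (φ j)] at hh
      refine le_trans hh ?_
      have hd : (1:ℝ)/((φ j : ℝ) + (K₀:ℝ) + 1) ≤ 1 := by
        rw [div_le_one (by positivity)]
        have : (0:ℝ) ≤ (φ j : ℝ) + (K₀:ℝ) := by positivity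
        linarith
      push_cast
      linarith
    have hbB : v ⬝ᵥ B *ᵥ v ≤ 0 := by
      refine recession_form_nonpos (M := B) (c := g) (β := μ)
        (fun j => hρpos (φ j)) hρφtop hconv (fun j => ?_)
      show qfun B g (ρ (φ j) • u (φ j)) ≤ μ
      rw [← hzu (φ j)]
      exact (hxC (φ j + K₀)).1
    have hdv : Tendsto (fun j => u (φ j) ⬝ᵥ v) atTop (𝓝 1) := by
      have := ((vdot_continuous v).tendsto v).comp hconv
      rwa [hvS] at this
    have hev : ∀ᶠ j in atTop, (1:ℝ)/2 < u (φ j) ⬝ᵥ v :=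
      hdv.eventually (eventually_gt_nhds (by norm_num))
    obtain ⟨j, hj⟩ := hev.exists
    refine ⟨v, hvS, hbA, hbB, 1/((φ j + K₀ : ℕ) + 1 : ℝ), by positivity,
      x (φ j + K₀), ?_, ?_, ?_⟩
    · exact hxC (φ j + K₀)
    · exact hxmin (φ j + K₀)
    · rw [hzu (φ j)]
      rw [smul_dotProduct, smul_eq_mul]
      have := hρpos (φ j)
      nlinarith

/-- Frank–Wolfe-type lemma: a quadratic function bounded below on `ℝⁿ` attains its minimum. -/
lemma fw_attains {M : Matrix (Fin n) (Fin n) ℝ} (hM : M.IsSymm) (c : Fin n → ℝ)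
    (hbdd : ∃ t : ℝ, ∀ x, t ≤ qfun M c x) :
    ∃ xh : Fin n → ℝ, ∀ x, qfun M c xh ≤ qfun M c x := by
  obtain ⟨t0, ht0⟩ := hbdd
  have hne : (Set.range (qfun M c)).Nonempty := ⟨qfun M c 0, ⟨0, rfl⟩⟩
  have hbb : BddBelow (Set.range (qfun M c)) := by
    refine ⟨t0, fun y hy => ?_⟩
    obtain ⟨x, rfl⟩ := hy
    exact ht0 x
  set m := sInf (Set.range (qfun M c)) with hm
  have hq0 : ∀ x : Fin n → ℝ, qfun (0 : Matrix (Fin n) (Fin n) ℝ) (0 : Fin n → ℝ) x = 0 := by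
    intro x; simp [qfun]
  have happrox : ∀ ε : ℝ, 0 < ε →
      ∃ x, qfun (0 : Matrix (Fin n) (Fin n) ℝ) (0 : Fin n → ℝ) x ≤ 1 ∧ qfun M c x ≤ m + ε := by
    intro ε hε
    have : m < m + ε := by linarith
    obtain ⟨y, hy, hlt⟩ := (csInf_lt_iff hbb hne).mp this
    obtain ⟨x, rfl⟩ := hy
    exact ⟨x, by rw [hq0]; norm_num, hlt.le⟩
  rcases dichotomy M (0 : Matrix (Fin n) (Fin n) ℝ) c (0 : Fin n → ℝ) 1 m happrox with
    ⟨x, _, hxF⟩ | ⟨v, hv1, hMv, _, ε, hε, x', hx'mem, hx'min, hx'v⟩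
  · exact ⟨x, fun y => le_trans hxF (csInf_le hbb ⟨y, rfl⟩)⟩
  · exfalso
    -- M is positive semidefinite since qfun is bounded below
    have hpsd : ∀ w, 0 ≤ w ⬝ᵥ M *ᵥ w := by
      intro w
      by_contra hneg
      push_neg at hneg
      have hq : Tendsto (fun t : ℝ => qfun M c ((0 : Fin n → ℝ) + t • w)) atTop atBot := by
        refine (quad_atBot hneg (qfun M c 0) (2 * ((M *ᵥ w) ⬝ᵥ (0 : Fin n → ℝ) - c ⬝ᵥ w))).congr
          (fun t => ?_)
        rw [qfun_expand hM]
        ring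
      obtain ⟨t, hlt⟩ := (hq.eventually (eventually_lt_atBot t0)).exists
      exact absurd (ht0 _) (not_le.mpr hlt)
    have hMv0 : v ⬝ᵥ M *ᵥ v = 0 := le_antisymm hMv (hpsd v)
    have hker : M *ᵥ v = 0 := psd_mulVec_zero (psd_of_form hM hpsd) hMv0
    have hcv : c ⬝ᵥ v = 0 := by
      by_contra hne0
      have hq : Tendsto (fun s : ℝ => qfun M c ((0 : Fin n → ℝ) + (s * (c ⬝ᵥ v)) • v))
          atTop atBot := by
        have hneg : -(2 * (c ⬝ᵥ v)^2) < 0 := by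
          have : (c ⬝ᵥ v)^2 > 0 := by positivity
          linarith
        refine (lin_atBot hneg (qfun M c 0)).congr (fun s => ?_)
        rw [qfun_expand hM, hker]
        simp only [zero_dotProduct, dotProduct_zero]
        ring
      obtain ⟨s, hlt⟩ := (hq.eventually (eventually_lt_atBot t0)).exists
      exact absurd (ht0 _) (not_le.mpr hlt)
    -- qfun M c is invariant under shifts along v; contradict minimality of x'
    have hinvar : ∀ (x : Fin n → ℝ) (t : ℝ), qfun M c (x + t • v) = qfun M c x := by
      intro x t
      rw [qfun_expand hM, hker, hcv]
      simp [dotProduct_zero, zero_dotProduct]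
    set y := x' + (-(x' ⬝ᵥ v)) • v with hy
    have hyF : qfun M c y = qfun M c x' := hinvar x' _
    have hymem : qfun (0 : Matrix (Fin n) (Fin n) ℝ) (0 : Fin n → ℝ) y ≤ 1 ∧
        qfun M c y ≤ m + ε := ⟨by rw [hq0]; norm_num, by rw [hyF]; exact hx'mem.2⟩
    have hle := hx'min y hymem
    have hylt : y ⬝ᵥ y < x' ⬝ᵥ x' := by
      rw [hy, dot_expand, hv1]
      nlinarith
    linarith

end QP1QCAux


/-- under the primal Slater condition, if (QP1QC) is bounded below and
`A + σ₁B ≽ 0`, `A + σ₂B ≽ 0` for some `σ₁ ≠ σ₂`, then the infimum is attained. -/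
theorem stmt_13 {n : ℕ} (A B : Matrix (Fin n) (Fin n) ℝ)
    (hA : A.IsSymm) (hB : B.IsSymm) (f g : Fin n → ℝ) (μ : ℝ)
    (slater : ∃ x₀ : Fin n → ℝ, x₀ ⬝ᵥ B *ᵥ x₀ - 2 * (g ⬝ᵥ x₀) < μ)
    (hbdd : ∃ t : ℝ, ∀ x : Fin n → ℝ,
      x ⬝ᵥ B *ᵥ x - 2 * (g ⬝ᵥ x) ≤ μ → t ≤ x ⬝ᵥ A *ᵥ x - 2 * (f ⬝ᵥ x))
    (σ₁ σ₂ : ℝ) (hne : σ₁ ≠ σ₂)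
    (h₁ : (A + σ₁ • B).PosSemidef) (h₂ : (A + σ₂ • B).PosSemidef) :
    ∃ xs : Fin n → ℝ, xs ⬝ᵥ B *ᵥ xs - 2 * (g ⬝ᵥ xs) ≤ μ ∧
      xs ⬝ᵥ A *ᵥ xs - 2 * (f ⬝ᵥ xs) =
        sInf ((fun x : Fin n → ℝ => x ⬝ᵥ A *ᵥ x - 2 * (f ⬝ᵥ x)) ''
          {x : Fin n → ℝ | x ⬝ᵥ B *ᵥ x - 2 * (g ⬝ᵥ x) ≤ μ}) := by
  classical
  obtain ⟨x₀, hx₀raw⟩ := slater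
  have hx₀ : qfun B g x₀ < μ := hx₀raw
  obtain ⟨t0, ht0raw⟩ := hbdd
  have ht0' : ∀ x, qfun B g x ≤ μ → t0 ≤ qfun A f x := fun x hx => ht0raw x hx
  set SET := (fun x : Fin n → ℝ => x ⬝ᵥ A *ᵥ x - 2 * (f ⬝ᵥ x)) ''
      {x : Fin n → ℝ | x ⬝ᵥ B *ᵥ x - 2 * (g ⬝ᵥ x) ≤ μ} with hSET
  set m := sInf SET with hm
  have hnemp : SET.Nonempty := ⟨_, ⟨x₀, hx₀.le, rfl⟩⟩
  have hbb : BddBelow SET := by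
    refine ⟨t0, fun y hy => ?_⟩
    obtain ⟨x, hx, rfl⟩ := hy
    exact ht0' x hx
  have hmle : ∀ x, qfun B g x ≤ μ → m ≤ qfun A f x := fun x hx => csInf_le hbb ⟨x, hx, rfl⟩
  suffices hsuf : ∃ xs, qfun B g xs ≤ μ ∧ qfun A f xs ≤ m by
    obtain ⟨xs, h1, h2⟩ := hsuf
    exact ⟨xs, h1, le_antisymm h2 (hmle xs h1)⟩
  have happrox : ∀ ε : ℝ, 0 < ε → ∃ x, qfun B g x ≤ μ ∧ qfun A f x ≤ m + ε := by
    intro ε hε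
    obtain ⟨y, hy, hlt⟩ := (csInf_lt_iff hbb hnemp).mp (show m < m + ε by linarith)
    obtain ⟨x, hx, rfl⟩ := hy
    exact ⟨x, hx, hlt.le⟩
  rcases dichotomy A B f g μ m happrox with hdone |
    ⟨v, hv1, hAv, hBv, ε, hε, x', hx'mem, hx'min, hx'v⟩
  · exact hdone
  rcases lt_or_eq_of_le hBv with hBvlt | hBv0
  · -- Case I : vᵀBv < 0
    have hGbot : ∀ x : Fin n → ℝ, Tendsto (fun t : ℝ => qfun B g (x + t • v)) atTop atBot := by
      intro x
      refine (quad_atBot hBvlt (qfun B g x) (2 * ((B *ᵥ v) ⬝ᵥ x - g ⬝ᵥ v))).congr (fun t => ?_)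
      rw [qfun_expand hB]
      ring
    rcases lt_or_eq_of_le hAv with hAvlt | hAv0
    · -- Ia : vᵀAv < 0 , contradiction with boundedness below
      exfalso
      have hFbot : Tendsto (fun t : ℝ => qfun A f (x₀ + t • v)) atTop atBot := by
        refine (quad_atBot hAvlt (qfun A f x₀) (2 * ((A *ᵥ v) ⬝ᵥ x₀ - f ⬝ᵥ v))).congr (fun t => ?_)
        rw [qfun_expand hA]
        ring
      obtain ⟨t, h1, h2⟩ := (((hGbot x₀).eventually (eventually_le_atBot μ)).and
        (hFbot.eventually (eventually_lt_atBot t0))).exists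
      exact absurd (ht0' _ h1) (not_le.mpr h2)
    · -- Ib : vᵀAv = 0
      have hc : ∀ x, qfun B g x ≤ μ → (A *ᵥ v) ⬝ᵥ x - f ⬝ᵥ v = 0 := by
        intro x hx
        by_contra hd0
        set d := (A *ᵥ v) ⬝ᵥ x - f ⬝ᵥ v with hd
        have hdne : d ≠ 0 := hd0
        have hFlin : Tendsto (fun s : ℝ => qfun A f (x + (s * -d) • v)) atTop atBot := by
          have hneg : -(2 * d^2) < 0 := by
            have h0 : 0 < d^2 := by positivity
            linarith
          refine (lin_atBot hneg (qfun A f x)).congr (fun s => ?_)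
          rw [qfun_expand hA, hAv0, ← hd]
          ring
        have hGq : Tendsto (fun s : ℝ => qfun B g (x + (s * -d) • v)) atTop atBot := by
          have hneg2 : d^2 * (v ⬝ᵥ B *ᵥ v) < 0 :=
            mul_neg_of_pos_of_neg (by positivity) hBvlt
          refine (quad_atBot hneg2 (qfun B g x)
            (-2 * d * ((B *ᵥ v) ⬝ᵥ x - g ⬝ᵥ v))).congr (fun s => ?_)
          rw [qfun_expand hB]
          ring
        obtain ⟨s, h1, h2⟩ := ((hGq.eventually (eventually_le_atBot μ)).and
          (hFlin.eventually (eventually_lt_atBot t0))).exists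
        exact absurd (ht0' _ h1) (not_le.mpr h2)
      -- consequently Av = 0 and f⬝v = 0
      have hopen : ∃ δ : ℝ, 0 < δ ∧ ∀ y : Fin n → ℝ, dist y x₀ < δ → qfun B g y < μ := by
        have hmem : {x : Fin n → ℝ | qfun B g x < μ} ∈ 𝓝 x₀ :=
          (isOpen_lt (qfun_continuous B g) continuous_const).mem_nhds hx₀
        obtain ⟨δ, hδ, hsub⟩ := Metric.mem_nhds_iff.mp hmem
        exact ⟨δ, hδ, fun y hy => hsub hy⟩
      obtain ⟨δ, hδ, hball⟩ := hopen
      have hx₀c : (A *ᵥ v) ⬝ᵥ x₀ - f ⬝ᵥ v = 0 :=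
        hc x₀ (le_of_lt (hball x₀ (by simpa using hδ)))
      have hAker : A *ᵥ v = 0 := by
        funext i
        have hyi : dist (x₀ + (δ/2) • (Pi.single i 1 : Fin n → ℝ)) x₀ < δ := by
          rw [dist_eq_norm]
          simp only [add_sub_cancel_left]
          rw [norm_smul]
          have hpi : ‖(Pi.single i 1 : Fin n → ℝ)‖ ≤ 1 := by
            rw [pi_norm_le_iff_of_nonneg zero_le_one]
            intro j
            rcases eq_or_ne j i with rfl | hji
            · simp
            · simp [Pi.single_eq_of_ne hji]
          have habs : ‖(δ/2 : ℝ)‖ = δ/2 := by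
            rw [Real.norm_eq_abs, abs_of_pos (by linarith)]
          calc ‖(δ/2 : ℝ)‖ * ‖(Pi.single i 1 : Fin n → ℝ)‖ ≤ ‖(δ/2 : ℝ)‖ * 1 :=
                mul_le_mul_of_nonneg_left hpi (norm_nonneg _)
            _ = δ/2 := by rw [habs, mul_one]
            _ < δ := by linarith
        have h1 := hc _ (le_of_lt (hball _ hyi))
        rw [dotProduct_add, dotProduct_smul, dotProduct_single, smul_eq_mul] at h1
        have h2 : (δ/2) * ((A *ᵥ v) i * 1) = 0 := by linarith [hx₀c]
        have h3 : (A *ᵥ v) i * 1 = 0 := by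
          rcases mul_eq_zero.mp h2 with h | h
          · exfalso; linarith
          · exact h
        simpa using h3
      have hfv : f ⬝ᵥ v = 0 := by
        have := hx₀c
        rw [hAker, zero_dotProduct] at this
        linarith
      have hFinv : ∀ (x : Fin n → ℝ) (t : ℝ), qfun A f (x + t • v) = qfun A f x := by
        intro x t
        rw [qfun_expand hA, hAker, hfv]
        simp
      have hlow : ∀ x, m ≤ qfun A f x := by
        intro x
        obtain ⟨t, ht⟩ := ((hGbot x).eventually (eventually_le_atBot μ)).exists
        have := hmle _ ht
        rwa [hFinv x t] at this
      obtain ⟨xh, hxh⟩ := fw_attains hA f ⟨m, hlow⟩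
      have hxhm : qfun A f xh ≤ m := by
        refine le_csInf hnemp ?_
        rintro y ⟨x, hx, rfl⟩
        exact hxh x
      obtain ⟨t, ht⟩ := ((hGbot xh).eventually (eventually_le_atBot μ)).exists
      refine ⟨xh + t • v, ht, ?_⟩
      rw [hFinv]
      exact hxhm
  · -- Case II : vᵀBv = 0
    have hform1 : v ⬝ᵥ (A + σ₁ • B) *ᵥ v = v ⬝ᵥ A *ᵥ v := by
      rw [Matrix.add_mulVec, dotProduct_add, Matrix.smul_mulVec, dotProduct_smul,
        smul_eq_mul, hBv0]
      ring
    have hform2 : v ⬝ᵥ (A + σ₂ • B) *ᵥ v = v ⬝ᵥ A *ᵥ v := by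
      rw [Matrix.add_mulVec, dotProduct_add, Matrix.smul_mulVec, dotProduct_smul,
        smul_eq_mul, hBv0]
      ring
    have hnn : 0 ≤ v ⬝ᵥ A *ᵥ v := by
      have h := h₁.dotProduct_mulVec_nonneg v
      simp only [star_trivial] at h
      rwa [hform1] at h
    have hAv0 : v ⬝ᵥ A *ᵥ v = 0 := le_antisymm hAv hnn
    have hS1 : (A + σ₁ • B) *ᵥ v = 0 := psd_mulVec_zero h₁ (by rw [hform1, hAv0])
    have hS2 : (A + σ₂ • B) *ᵥ v = 0 := psd_mulVec_zero h₂ (by rw [hform2, hAv0])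
    have hBker : B *ᵥ v = 0 := by
      have hdiff : (σ₁ - σ₂) • (B *ᵥ v) = 0 := by
        have heq : (A + σ₁ • B) *ᵥ v - (A + σ₂ • B) *ᵥ v = (σ₁ - σ₂) • (B *ᵥ v) := by
          rw [Matrix.add_mulVec, Matrix.add_mulVec, Matrix.smul_mulVec,
            Matrix.smul_mulVec, sub_smul]
          abel
        rw [hS1, hS2, sub_zero] at heq
        exact heq.symm
      exact (smul_eq_zero.mp hdiff).resolve_left (sub_ne_zero.mpr hne)
    have hAker : A *ᵥ v = 0 := by
      have h := hS1
      rwa [Matrix.add_mulVec, Matrix.smul_mulVec, hBker, smul_zero, add_zero] at h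
    set a := f ⬝ᵥ v with ha
    set b := g ⬝ᵥ v with hb'
    have hFsh : ∀ (x : Fin n → ℝ) (t : ℝ), qfun A f (x + t • v) = qfun A f x - 2 * t * a := by
      intro x t
      rw [qfun_expand hA, hAker]
      simp only [zero_dotProduct, dotProduct_zero, zero_sub, mul_zero, add_zero, ← ha]
      ring
    have hGsh : ∀ (x : Fin n → ℝ) (t : ℝ), qfun B g (x + t • v) = qfun B g x - 2 * t * b := by
      intro x t
      rw [qfun_expand hB, hBker]
      simp only [zero_dotProduct, dotProduct_zero, zero_sub, mul_zero, add_zero, ← hb']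
      ring
    by_cases hbz : b = 0
    · by_cases haz : a = 0
      · -- II-3 : both vanish, contradiction with norm-minimality
        exfalso
        set y := x' + (-(x' ⬝ᵥ v)) • v with hy
        have hymem : qfun B g y ≤ μ ∧ qfun A f y ≤ m + ε := by
          constructor
          · rw [hy, hGsh, hbz]
            simpa using hx'mem.1
          · rw [hy, hFsh, haz]
            simpa using hx'mem.2
        have hle := hx'min y hymem
        have hlt : y ⬝ᵥ y < x' ⬝ᵥ x' := by
          rw [hy, dot_expand, hv1]
          nlinarith
        linarith
      · -- b = 0, a ≠ 0 : unbounded below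
        exfalso
        have hFlin : Tendsto (fun s : ℝ => qfun A f (x₀ + (s * a) • v)) atTop atBot := by
          have hneg : -(2 * a^2) < 0 := by
            have h0 : 0 < a^2 := by positivity
            linarith
          refine (lin_atBot hneg (qfun A f x₀)).congr (fun s => ?_)
          rw [hFsh]
          ring
        obtain ⟨s, hs⟩ := (hFlin.eventually (eventually_lt_atBot t0)).exists
        have hGs : qfun B g (x₀ + (s * a) • v) ≤ μ := by
          rw [hGsh, hbz]
          simpa using hx₀.le
        exact absurd (ht0' _ hGs) (not_le.mpr hs)
    · rcases le_or_gt (a * b) 0 with hab | hab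
      · -- b ≠ 0, a·b ≤ 0 : Lagrangian trick
        set lam := a / b with hlam
        have hb2 : (0:ℝ) < b^2 := by positivity
        have hlam_eq : lam = a * b / b^2 := by
          rw [hlam]
          field_simp
        have hlam_nonpos : lam ≤ 0 := by
          rw [hlam_eq]
          exact div_nonpos_of_nonpos_of_nonneg hab hb2.le
        have hshift : ∀ x : Fin n → ℝ,
            qfun B g (x + ((qfun B g x - μ)/(2*b)) • v) = μ := by
          intro x
          rw [hGsh]
          field_simp
          ring
        have hshiftF : ∀ x : Fin n → ℝ,
            qfun A f (x + ((qfun B g x - μ)/(2*b)) • v)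
              = qfun A f x - lam * (qfun B g x - μ) := by
          intro x
          rw [hFsh, hlam]
          field_simp
        have hMsymm : (A - lam • B).IsSymm := by
          rw [Matrix.IsSymm, Matrix.transpose_sub, Matrix.transpose_smul, hA, hB]
        have hpsi : ∀ x, qfun (A - lam • B) (f - lam • g) x
            = qfun A f x - lam * qfun B g x := by
          intro x
          simp only [qfun, Matrix.sub_mulVec, Matrix.smul_mulVec, dotProduct_sub,
            sub_dotProduct, dotProduct_smul, smul_dotProduct, smul_eq_mul, Pi.sub_apply]
          ring
        have hpsi_bdd : ∀ x, m - lam * μ ≤ qfun (A - lam • B) (f - lam • g) x := by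
          intro x
          have h1 : m ≤ qfun A f x - lam * (qfun B g x - μ) := by
            rw [← hshiftF x]
            exact hmle _ (le_of_eq (hshift x))
          rw [hpsi]
          linarith
        obtain ⟨xh, hxh⟩ := fw_attains hMsymm (f - lam • g) ⟨m - lam*μ, hpsi_bdd⟩
        refine ⟨xh + ((qfun B g xh - μ)/(2*b)) • v, le_of_eq (hshift xh), ?_⟩
        rw [hshiftF]
        refine le_csInf hnemp ?_
        rintro y ⟨x, hx, rfl⟩
        have hx' : qfun B g x ≤ μ := hx
        have h1 : qfun (A - lam•B) (f - lam•g) xh ≤ qfun (A - lam•B) (f - lam•g) x := hxh x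
        rw [hpsi, hpsi] at h1
        have h2 : 0 ≤ lam * (qfun B g x - μ) := by
          have hgm : (0:ℝ) ≤ μ - qfun B g x := by linarith [hx']
          have := mul_nonneg (neg_nonneg.mpr hlam_nonpos) hgm
          nlinarith
        show qfun A f xh - lam * (qfun B g xh - μ) ≤ qfun A f x
        linarith
      · -- b ≠ 0, a·b > 0 : unbounded below
        exfalso
        have haz : a ≠ 0 := by
          intro h
          rw [h, zero_mul] at hab
          exact lt_irrefl 0 hab
        have hFlin : Tendsto (fun s : ℝ => qfun A f (x₀ + (s * a) • v)) atTop atBot := by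
          have h0 : 0 < a^2 := by positivity
          have hneg : -(2 * a^2) < 0 := by linarith
          refine (lin_atBot hneg (qfun A f x₀)).congr (fun s => ?_)
          rw [hFsh]
          ring
        obtain ⟨s, hs1, hs2⟩ := ((hFlin.eventually (eventually_lt_atBot t0)).and
          (eventually_ge_atTop (0:ℝ))).exists
        have hGs : qfun B g (x₀ + (s * a) • v) ≤ μ := by
          rw [hGsh]
          have hnn2 : 0 ≤ 2 * (s * a) * b := by nlinarith
          linarith [hx₀]
        exact absurd (ht0' _ hGs) (not_le.mpr hs1)
end

section
/- Let M be a real symmetric (n+1)×(n+1) matrix. Then the inequality [xᵀ, 1] M [x; 1] ≥ 0 holds for every x ∈ ℝⁿ (where [x; 1] denotes the vector in ℝ^{n+1} obtained by appending the entry 1 to x) if and only if M is positive semidefinite. -/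
open Matrix

private lemma expand_quad {m : ℕ} (M : Matrix (Fin m) (Fin m) ℝ) (w u : Fin m → ℝ) (s : ℝ) :
    (w + s • u) ⬝ᵥ M *ᵥ (w + s • u) =
      w ⬝ᵥ M *ᵥ w + s * (u ⬝ᵥ M *ᵥ w + w ⬝ᵥ M *ᵥ u) + s ^ 2 * (u ⬝ᵥ M *ᵥ u) := by
  simp [mulVec_add, mulVec_smul, dotProduct_add, add_dotProduct, dotProduct_smul,
    smul_dotProduct]
  ring

/-- for a symmetric `(n+1)×(n+1)` matrix `M`,
`[xᵀ, 1] M [x; 1] ≥ 0` for all `x ∈ ℝⁿ` iff `M ≽ 0`. -/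
theorem stmt_16 {n : ℕ} (M : Matrix (Fin (n + 1)) (Fin (n + 1)) ℝ)
    (hM : M.IsSymm) :
    (∀ x : Fin n → ℝ,
      0 ≤ (Fin.snoc x 1 : Fin (n + 1) → ℝ) ⬝ᵥ M *ᵥ (Fin.snoc x 1 : Fin (n + 1) → ℝ)) ↔
      M.PosSemidef := by
  constructor
  · intro h
    have hH : M.IsHermitian := by
      rw [Matrix.IsHermitian, Matrix.conjTranspose_eq_transpose_of_trivial]
      exact hM
    refine Matrix.posSemidef_iff_dotProduct_mulVec.mpr ⟨hH, ?_⟩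
    intro v
    simp only [star_trivial]
    by_cases ht : v (Fin.last n) = 0
    · -- last coordinate zero: quadratic-in-s argument
      set y : Fin n → ℝ := fun i => v i.castSucc with hy
      have hveq : ∀ s : ℝ, (Fin.snoc (s • y) 1 : Fin (n + 1) → ℝ)
          = (Fin.snoc 0 1 : Fin (n + 1) → ℝ) + s • v := by
        intro s
        funext i
        refine Fin.lastCases ?_ ?_ i
        · simp [ht]
        · intro j
          simp [hy]
      set w : Fin (n + 1) → ℝ := (Fin.snoc 0 1 : Fin (n + 1) → ℝ) with hw
      have key : ∀ s : ℝ, 0 ≤ w ⬝ᵥ M *ᵥ w + s * (v ⬝ᵥ M *ᵥ w + w ⬝ᵥ M *ᵥ v)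
          + s ^ 2 * (v ⬝ᵥ M *ᵥ v) := by
        intro s
        have := h (s • y)
        rw [hveq s, expand_quad] at this
        exact this
      by_contra hneg
      push_neg at hneg
      set A := v ⬝ᵥ M *ᵥ v with hA
      set c := v ⬝ᵥ M *ᵥ w + w ⬝ᵥ M *ᵥ v with hc
      set qw := w ⬝ᵥ M *ᵥ w with hqw
      have hAneg : A < 0 := hneg
      have hqw0 : 0 ≤ qw := by have := key 0; simpa using this
      set s₀ : ℝ := max 1 ((qw + 1) / (-A)) with hs₀
      have hs1 : 1 ≤ s₀ := le_max_left _ _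
      have hs2 : (qw + 1) / (-A) ≤ s₀ := le_max_right _ _
      have hApos : 0 < -A := by linarith
      have hs2' : qw + 1 ≤ -A * s₀ := by
        rw [div_le_iff₀ hApos] at hs2
        linarith [hs2]
      have h1 := key s₀
      have h2 := key (-s₀)
      nlinarith [mul_le_mul_of_nonneg_left hs2' (by linarith : (0:ℝ) ≤ s₀), sq_nonneg s₀]
    · -- last coordinate nonzero: scale
      set t := v (Fin.last n) with hT
      set y : Fin n → ℝ := fun i => v i.castSucc / t with hy
      have hveq : v = t • (Fin.snoc y 1 : Fin (n + 1) → ℝ) := by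
        funext i
        refine Fin.lastCases ?_ ?_ i
        · simp [hT]
        · intro j
          simp [hy]
          field_simp
      have := h y
      have hq : v ⬝ᵥ M *ᵥ v = t ^ 2 * ((Fin.snoc y 1 : Fin (n + 1) → ℝ) ⬝ᵥ M *ᵥ (Fin.snoc y 1 : Fin (n + 1) → ℝ)) := by
        rw [hveq]
        simp [mulVec_smul, dotProduct_smul, smul_dotProduct]
        ring
      rw [hq]
      positivity
  · intro h x
    simpa using h.dotProduct_mulVec_nonneg (Fin.snoc x 1 : Fin (n + 1) → ℝ)
end

section
/- Let B be a real symmetric n×n matrix, g ∈ ℝⁿ and μ ∈ ℝ, and let G(x) = xᵀBx − 2gᵀx. Then the primal Slater condition fails, i.e., there is no x ∈ ℝⁿ with G(x) < μ, if and only if B is positive semidefinite, there exists w ∈ ℝⁿ with Bw = g, and −gᵀw ≥ μ for such w. (Note that in this case μ ≤ 0, and the value gᵀw does not depend on the choice of w satisfying Bw = g.) -/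
open Matrix

lemma symm_dot_swap {n : ℕ} (B : Matrix (Fin n) (Fin n) ℝ) (hB : B.IsSymm)
    (a b : Fin n → ℝ) : a ⬝ᵥ B *ᵥ b = b ⬝ᵥ B *ᵥ a := by
  rw [dotProduct_mulVec, ← mulVec_transpose, hB, dotProduct_comm]

lemma range_aux {n : ℕ} (B : Matrix (Fin n) (Fin n) ℝ) (hB : B.IsSymm) (g : Fin n → ℝ)
    (h : ∀ v, B *ᵥ v = 0 → g ⬝ᵥ v = 0) : ∃ w, B *ᵥ w = g := by
  classical
  set f := Matrix.toEuclideanLin B with hf_def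
  have hherm : B.IsHermitian := by
    rwa [Matrix.IsHermitian, Matrix.conjTranspose_eq_transpose_of_trivial]
  have hf : f.IsSymmetric := Matrix.isHermitian_iff_isSymmetric.mp hherm
  have hker : LinearMap.ker f = (LinearMap.range f)ᗮ := by
    ext x
    simp only [LinearMap.mem_ker, Submodule.mem_orthogonal]
    constructor
    · rintro hx u ⟨y, rfl⟩
      rw [hf y x, hx, inner_zero_right]
    · intro hx
      have h2 : (inner ℝ (f x) (f x) : ℝ) = 0 := by
        rw [← hf (f x) x]
        exact hx (f (f x)) ⟨f x, rfl⟩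
      exact inner_self_eq_zero.mp h2
  have hrange : LinearMap.range f = (LinearMap.ker f)ᗮ := by
    rw [hker, Submodule.orthogonal_orthogonal]
  set g' : EuclideanSpace ℝ (Fin n) := (WithLp.equiv 2 (Fin n → ℝ)).symm g with hg'
  have hmem : g' ∈ (LinearMap.ker f)ᗮ := by
    intro v hv
    have hv0 : B *ᵥ (WithLp.equiv 2 (Fin n → ℝ) v) = 0 := by
      have := LinearMap.mem_ker.mp hv
      have := congrArg (WithLp.equiv 2 (Fin n → ℝ)) this
      simpa [hf_def, Matrix.toEuclideanLin_apply] using this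
    have := h _ hv0
    simp only [PiLp.inner_apply, RCLike.inner_apply, starRingEnd_apply, star_trivial, hg',
      WithLp.equiv_symm_apply, PiLp.toLp_apply]
    simpa [dotProduct, mul_comm] using this
  rw [← hrange] at hmem
  obtain ⟨y, hy⟩ := hmem
  refine ⟨WithLp.equiv 2 (Fin n → ℝ) y, ?_⟩
  have := congrArg (WithLp.equiv 2 (Fin n → ℝ)) hy
  simpa [hf_def, Matrix.toEuclideanLin_apply, hg'] using this

/-- the primal Slater condition for `G(x) = xᵀBx − 2gᵀx ≤ μ` fails iff
`B ≽ 0`, `g ∈ R(B)` (say `Bw = g`), and `−gᵀw ≥ μ`. -/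
theorem stmt_18 {n : ℕ} (B : Matrix (Fin n) (Fin n) ℝ)
    (hB : B.IsSymm) (g : Fin n → ℝ) (μ : ℝ) :
    (¬ ∃ x : Fin n → ℝ, x ⬝ᵥ B *ᵥ x - 2 * (g ⬝ᵥ x) < μ) ↔
      (B.PosSemidef ∧ ∃ w : Fin n → ℝ, B *ᵥ w = g ∧ μ ≤ -(g ⬝ᵥ w)) := by
  have hherm : B.IsHermitian := by
    rwa [Matrix.IsHermitian, Matrix.conjTranspose_eq_transpose_of_trivial]
  constructor
  · intro h
    push_neg at h
    -- PSD
    have hpsd : B.PosSemidef := by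
      refine PosSemidef.of_dotProduct_mulVec_nonneg hherm (fun x => ?_)
      simp only [star_trivial]
      by_contra hneg
      push_neg at hneg
      set a := x ⬝ᵥ B *ᵥ x with ha
      set b := 2 * (g ⬝ᵥ x) with hb
      have key : ∀ t : ℝ, μ ≤ t^2 * a - t * b := by
        intro t
        have := h (t • x)
        have e1 : (t • x) ⬝ᵥ B *ᵥ (t • x) = t^2 * a := by
          rw [mulVec_smul, dotProduct_smul, smul_dotProduct, smul_eq_mul, smul_eq_mul, ha]
          ring
        have e2 : g ⬝ᵥ (t • x) = t * (g ⬝ᵥ x) := by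
          rw [dotProduct_smul]; rfl
        rw [e1, e2] at this
        have e3 : t * b = 2 * (t * (g ⬝ᵥ x)) := by rw [hb]; ring
        linarith [this]
      set t := max 1 ((|b| + |μ| + 1) / (-a)) with ht
      have ht1 : (1 : ℝ) ≤ t := le_max_left _ _
      have ht2 : (|b| + |μ| + 1) / (-a) ≤ t := le_max_right _ _
      have hna : 0 < -a := by linarith
      have h2 : a * t ≤ -(|b| + |μ| + 1) := by
        have := (div_le_iff₀ hna).mp ht2
        nlinarith
      have := key t
      nlinarith [abs_nonneg b, abs_nonneg μ, le_abs_self b, neg_abs_le b, le_abs_self μ,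
        neg_abs_le μ, mul_le_mul_of_nonneg_right h2 (by linarith : (0:ℝ) ≤ t)]
    -- range
    obtain ⟨w, hw⟩ := range_aux B hB g (by
      intro v hv
      by_contra hc
      set c := g ⬝ᵥ v with hc'
      have key : ∀ t : ℝ, μ ≤ -(2 * (t * c)) := by
        intro t
        have := h (t • v)
        have e1 : (t • v) ⬝ᵥ B *ᵥ (t • v) = 0 := by
          rw [mulVec_smul, hv]
          simp
        have e2 : g ⬝ᵥ (t • v) = t * c := by
          rw [dotProduct_smul]; rfl
        rw [e1, e2] at this
        linarith
      have hcne : c ≠ 0 := hc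
      have := key ((1 - μ) / (2 * c))
      have e : -(2 * ((1 - μ) / (2 * c) * c)) = μ - 1 := by
        field_simp
        ring
      linarith)
    refine ⟨hpsd, w, hw, ?_⟩
    have := h w
    have e1 : w ⬝ᵥ B *ᵥ w = g ⬝ᵥ w := by rw [hw, dotProduct_comm]
    rw [e1] at this
    linarith
  · rintro ⟨hpsd, w, hw, hμ⟩
    rintro ⟨x, hx⟩
    have h0 : 0 ≤ (x - w) ⬝ᵥ B *ᵥ (x - w) := by
      have := hpsd.dotProduct_mulVec_nonneg (x - w)
      simpa using this
    have e1 : x ⬝ᵥ B *ᵥ w = g ⬝ᵥ x := by rw [hw, dotProduct_comm]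
    have e2 : w ⬝ᵥ B *ᵥ x = g ⬝ᵥ x := by
      rw [symm_dot_swap B hB w x, hw, dotProduct_comm]
    have e3 : w ⬝ᵥ B *ᵥ w = g ⬝ᵥ w := by rw [hw, dotProduct_comm]
    have expand : (x - w) ⬝ᵥ B *ᵥ (x - w)
        = x ⬝ᵥ B *ᵥ x - x ⬝ᵥ B *ᵥ w - w ⬝ᵥ B *ᵥ x + w ⬝ᵥ B *ᵥ w := by
      rw [mulVec_sub, sub_dotProduct, dotProduct_sub, dotProduct_sub]
      ring
    rw [expand, e1, e2, e3] at h0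
    linarith
end
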